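/- arXiv:math/0610577 — 3 statements merged into one kernel-verified Lean document; each statement's English description precedes it below -/
import Mathlib

section
/- The sum of the two convergent improper integrals ∫₀¹ ((1 + e^{-2t})/(1 - e^{-2t}) − 1/t) · (1/t) dt and ∫₁^∞ (2e^{-2t}/(1 - e^{-2t})) · (1/t) dt equals 1 − log π + γ, where γ is the Euler–Mascheroni constant. -/
open Set Filter Topology Asymptotics MeasureTheory Complex

namespace BZ


/-- error function `1/(e^u - 1) - 1/u` -/
noncomputable def vR (u : ℝ) : ℝ := 1 / (Real.exp u - 1) - 1 / u

lemma exp_sub_one_pos {u : ℝ} (hu : 0 < u) : 0 < Real.exp u - 1 := by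
  have := Real.exp_lt_exp.mpr hu
  simp only [Real.exp_zero] at this
  linarith

lemma vR_nonpos {u : ℝ} (hu : 0 < u) : vR u ≤ 0 := by
  have h1 : u + 1 ≤ Real.exp u := Real.add_one_le_exp u
  have h2 : 0 < Real.exp u - 1 := exp_sub_one_pos hu
  have : 1 / (Real.exp u - 1) ≤ 1 / u := by
    apply one_div_le_one_div_of_le hu; linarith
  simp only [vR]; linarith

lemma vR_neg_le_one {u : ℝ} (hu : 0 < u) : -1 ≤ vR u := by
  have h1 : 1 - u ≤ Real.exp (-u) := by linarith [Real.add_one_le_exp (-u)]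
  have h2 : 0 < Real.exp u - 1 := exp_sub_one_pos hu
  have h3 : (1 - u) * Real.exp u ≤ 1 := by
    have := mul_le_mul_of_nonneg_right h1 (Real.exp_pos u).le
    rwa [← Real.exp_add, neg_add_cancel, Real.exp_zero] at this
  -- need : 1/u - 1/(e^u-1) ≤ 1
  have h4 : Real.exp u - 1 - u ≤ u * (Real.exp u - 1) := by nlinarith
  have h5 : 1 / u - 1 / (Real.exp u - 1) ≤ 1 := by
    rw [div_sub_div _ _ (ne_of_gt hu) (ne_of_gt h2), div_le_one (by positivity)]
    nlinarith
  simp only [vR]; linarith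

lemma abs_vR_le_one {u : ℝ} (hu : 0 < u) : |vR u| ≤ 1 := by
  rw [abs_le]; exact ⟨vR_neg_le_one hu, (vR_nonpos hu).trans zero_le_one⟩

lemma abs_vR_le_inv {u : ℝ} (hu : 0 < u) : |vR u| ≤ 1 / u := by
  have h2 : 0 < Real.exp u - 1 := exp_sub_one_pos hu
  have : 0 < 1 / (Real.exp u - 1) := by positivity
  rw [abs_le]
  constructor
  · simp only [vR]; linarith
  · have h4 : 0 < 1 / u := one_div_pos.mpr hu
    linarith [vR_nonpos hu]

/-- the auxiliary function for the O(u) bound -/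
noncomputable def gR (u : ℝ) : ℝ := (u - 2) * Real.exp u + u + 2

lemma gR_deriv (u : ℝ) : HasDerivAt gR ((u - 1) * Real.exp u + 1) u := by
  have h1 : HasDerivAt (fun u : ℝ => (u - 2) * Real.exp u) (1 * Real.exp u + (u - 2) * Real.exp u) u :=
    ((hasDerivAt_id u).sub_const 2).mul (Real.hasDerivAt_exp u)
  have h2 : HasDerivAt (fun u : ℝ => u + 2) 1 u := (hasDerivAt_id u).add_const 2
  have := h1.add h2
  have hf : ((fun u : ℝ => (u - 2) * Real.exp u) + fun u => u + 2) = gR := by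
    funext x; simp [gR]; ring
  rw [hf] at this
  exact this.congr_deriv (by ring)

lemma gR_deriv_nonneg (u : ℝ) : 0 ≤ (u - 1) * Real.exp u + 1 := by
  have h1 : 1 - u ≤ Real.exp (-u) := by linarith [Real.add_one_le_exp (-u)]
  have h3 : (1 - u) * Real.exp u ≤ 1 := by
    have := mul_le_mul_of_nonneg_right h1 (Real.exp_pos u).le
    rwa [← Real.exp_add, neg_add_cancel, Real.exp_zero] at this
  nlinarith

lemma gR_nonneg {u : ℝ} (hu : 0 ≤ u) : 0 ≤ gR u := by
  have hmono : Monotone gR := by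
    apply monotone_of_deriv_nonneg
    · exact fun x => (gR_deriv x).differentiableAt
    · intro x; rw [(gR_deriv x).deriv]; exact gR_deriv_nonneg x
  have h0 : gR 0 = 0 := by simp [gR]
  calc (0:ℝ) = gR 0 := h0.symm
  _ ≤ gR u := hmono hu

lemma exp_two_lt_eight : Real.exp 2 < 8 := by
  have h := Real.exp_one_lt_d9
  have : Real.exp 2 = Real.exp 1 * Real.exp 1 := by
    rw [← Real.exp_add]; norm_num
  nlinarith [Real.exp_pos 1]

lemma gR_le {u : ℝ} (hu : 0 ≤ u) (hu2 : u ≤ 2) : gR u ≤ 4 / 3 * u ^ 3 := by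
  -- h(u) = 4/3 u^3 - g(u), h'' = u(8 - e^u) ≥ 0 on [0,2]
  set h' : ℝ → ℝ := fun u => 4 * u ^ 2 - ((u - 1) * Real.exp u + 1) with hh'
  have hd : ∀ x : ℝ, HasDerivAt (fun u => 4 / 3 * u ^ 3 - gR u) (h' x) x := by
    intro x
    have : HasDerivAt (fun u : ℝ => 4 / 3 * u ^ 3) (4 / 3 * (3 * x ^ 2)) x :=
      (hasDerivAt_pow 3 x).const_mul (4/3) |>.congr_deriv (by ring)
    have := this.sub (gR_deriv x)
    exact this.congr_deriv (by simp only [hh']; ring)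
  have hd' : ∀ x : ℝ, HasDerivAt h' (8 * x - x * Real.exp x) x := by
    intro x
    have h1 : HasDerivAt (fun u : ℝ => 4 * u ^ 2) (4 * (2 * x)) x :=
      (hasDerivAt_pow 2 x).const_mul 4 |>.congr_deriv (by ring)
    have h2 : HasDerivAt (fun u : ℝ => (u - 1) * Real.exp u + 1)
        (1 * Real.exp x + (x - 1) * Real.exp x) x :=
      (((hasDerivAt_id x).sub_const 1).mul (Real.hasDerivAt_exp x)).add_const 1
    have := h1.sub h2
    exact this.congr_deriv (by ring)
  -- h' is monotone on [0,2], h' 0 = 0, so h' ≥ 0 on [0,2]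
  have hmono' : MonotoneOn h' (Icc (0:ℝ) 2) := by
    apply monotoneOn_of_deriv_nonneg (convex_Icc 0 2)
    · exact Continuous.continuousOn (by continuity)
    · intro x _; exact (hd' x).differentiableAt.differentiableWithinAt
    · intro x hx
      rw [interior_Icc] at hx
      rw [(hd' x).deriv]
      have hex : Real.exp x ≤ 8 := by
        have := Real.exp_le_exp.mpr (le_of_lt hx.2)
        linarith [exp_two_lt_eight]
      nlinarith [hx.1.le, hx.2.le]
  have h'0 : h' 0 = 0 := by simp [hh']
  have h'nonneg : ∀ x ∈ Icc (0:ℝ) 2, 0 ≤ h' x := by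
    intro x hx
    calc (0:ℝ) = h' 0 := h'0.symm
    _ ≤ h' x := hmono' (left_mem_Icc.mpr (by norm_num)) hx hx.1
  have hmono : MonotoneOn (fun u => 4 / 3 * u ^ 3 - gR u) (Icc (0:ℝ) 2) := by
    apply monotoneOn_of_deriv_nonneg (convex_Icc 0 2)
    · apply Continuous.continuousOn
      have : Continuous gR := by unfold gR; continuity
      continuity
    · intro x _; exact (hd x).differentiableAt.differentiableWithinAt
    · intro x hx
      rw [interior_Icc] at hx
      rw [(hd x).deriv]
      exact h'nonneg x ⟨hx.1.le, hx.2.le⟩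
  have := hmono (left_mem_Icc.mpr (by norm_num)) ⟨hu, hu2⟩ hu
  simp only [gR] at this ⊢
  simp only [Real.exp_zero] at this
  nlinarith [this]

/-- the key O(u) bound near 0 -/
lemma abs_vR_add_half_le {u : ℝ} (hu : 0 < u) (hu2 : u ≤ 2) : |vR u + 1 / 2| ≤ 3 / 4 * u := by
  have hE : 0 < Real.exp u - 1 := exp_sub_one_pos hu
  have huE : u ≤ Real.exp u - 1 := by linarith [Real.add_one_le_exp u]
  have heq : vR u + 1 / 2 = gR u / (2 * u * (Real.exp u - 1)) := by
    simp only [vR, gR]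
    field_simp
    ring
  rw [heq, _root_.abs_of_nonneg (div_nonneg (gR_nonneg hu.le) (by positivity))]
  rw [div_le_iff₀ (by positivity)]
  have h2 := gR_le hu.le hu2
  nlinarith [gR_nonneg hu.le]



noncomputable def bose (t : ℝ) : ℂ := ((1 / (Real.exp t - 1) : ℝ) : ℂ)
noncomputable def w (t : ℝ) : ℂ := ((vR t : ℝ) : ℂ)
noncomputable def f0 : ℝ → ℂ := (Ioc (0:ℝ) 1).indicator w
noncomputable def f1 : ℝ → ℂ := (Ioi (1:ℝ)).indicator bose
noncomputable def FF0 : ℝ → ℂ := (Ioc (0:ℝ) 1).indicator (fun t => 2 * w (2*t) + 1)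
noncomputable def FF1 : ℝ → ℂ := (Ioi (1:ℝ)).indicator (fun t => 2 * w (2*t) + ((t:ℂ))⁻¹)
noncomputable def w2 : ℝ → ℂ := fun t => w (2*t)

lemma measurable_vR : Measurable vR :=
  (measurable_const.div ((Real.measurable_exp).sub measurable_const)).sub
    (measurable_const.div measurable_id)
lemma measurable_bose : Measurable bose :=
  Complex.measurable_ofReal.comp (measurable_const.div ((Real.measurable_exp).sub measurable_const))
lemma measurable_w : Measurable w := Complex.measurable_ofReal.comp measurable_vR
lemma measurable_w2 : Measurable w2 := measurable_w.comp (measurable_const_mul 2)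
lemma measurable_f0 : Measurable f0 := measurable_w.indicator measurableSet_Ioc
lemma measurable_f1 : Measurable f1 := measurable_bose.indicator measurableSet_Ioi
lemma measurable_FF0 : Measurable FF0 :=
  ((measurable_w2.const_mul 2).add_const 1).indicator measurableSet_Ioc
lemma measurable_FF1 : Measurable FF1 :=
  ((measurable_w2.const_mul 2).add (Complex.measurable_ofReal.inv)).indicator measurableSet_Ioi

-- norms
lemma norm_w_le_one {t : ℝ} (ht : 0 < t) : ‖w t‖ ≤ 1 := by
  simpa [w, Complex.norm_real] using abs_vR_le_one ht
lemma norm_w_le_inv {t : ℝ} (ht : 0 < t) : ‖w t‖ ≤ 1 / t := by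
  simpa [w, Complex.norm_real] using abs_vR_le_inv ht
lemma w2_def (t : ℝ) : w2 t = w (2*t) := rfl
lemma norm_w2_le_one {t : ℝ} (ht : 0 < t) : ‖w2 t‖ ≤ 1 := by
  rw [w2_def]; exact norm_w_le_one (by linarith)
lemma norm_w2_le_inv {t : ℝ} (ht : 0 < t) : ‖w2 t‖ ≤ 1 / t := by
  rw [w2_def]
  have := norm_w_le_inv (t := 2*t) (by linarith)
  refine this.trans ?_
  rw [div_le_div_iff₀ (by linarith) ht]; linarith

lemma two_w2_add_one_eq (t : ℝ) : 2 * w (2*t) + 1 = ((2 * vR (2*t) + 1 : ℝ) : ℂ) := by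
  simp only [w]; push_cast; ring

lemma norm_FF0_core {t : ℝ} (ht : 0 < t) (ht1 : t ≤ 1) : ‖2 * w (2*t) + 1‖ ≤ 3 * t := by
  rw [two_w2_add_one_eq, Complex.norm_real]
  have h := abs_vR_add_half_le (u := 2*t) (by linarith) (by linarith)
  rw [Real.norm_eq_abs]
  have he : 2 * vR (2*t) + 1 = 2 * (vR (2*t) + 1/2) := by ring
  rw [he, abs_mul]
  have h2 : |(2:ℝ)| = 2 := by norm_num
  rw [h2]
  nlinarith [abs_nonneg (vR (2*t) + 1/2)]

lemma w2_add_inv_eq {t : ℝ} (ht : t ≠ 0) : 2 * w (2*t) + ((t:ℂ))⁻¹ = 2 * bose (2*t) := by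
  simp only [w, bose, vR]
  have h2t : (2:ℝ)*t ≠ 0 := by simpa using ht
  push_cast
  have htc : (t:ℂ) ≠ 0 := by exact_mod_cast ht
  field_simp
  ring

lemma norm_bose_le {t : ℝ} (ht : 1 ≤ t) : ‖bose t‖ ≤ 2 * Real.exp (-t) := by
  have h2 : (2:ℝ) ≤ Real.exp t := by
    have := Real.add_one_le_exp 1
    have h3 := Real.exp_le_exp.mpr ht
    linarith
  have hE : 0 < Real.exp t - 1 := by linarith
  rw [bose, Complex.norm_real, Real.norm_eq_abs, _root_.abs_of_nonneg (by positivity)]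
  rw [Real.exp_neg, div_le_iff₀ hE]
  have hinv : Real.exp t * (Real.exp t)⁻¹ = 1 := mul_inv_cancel₀ (Real.exp_pos t).ne'
  have hy : 0 < (Real.exp t)⁻¹ := by positivity
  nlinarith [hinv, hy, h2]

-- local integrability from boundedness on Ioi 0
lemma locInt {f : ℝ → ℂ} (hm : Measurable f) {C : ℝ}
    (hC : ∀ t : ℝ, 0 < t → ‖f t‖ ≤ C) : LocallyIntegrableOn f (Ioi 0) := by
  intro x hx
  refine ⟨Ioo 0 (x+1), ?_, ?_⟩
  · exact Filter.inter_mem self_mem_nhdsWithin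
      (mem_nhdsWithin_of_mem_nhds (Iio_mem_nhds (lt_add_one x)))
  · apply Measure.integrableOn_of_bounded (M := C)
    · rw [Real.volume_Ioo]; exact ENNReal.ofReal_ne_top
    · exact hm.aestronglyMeasurable
    · exact (ae_restrict_iff' measurableSet_Ioo).2 (ae_of_all _ fun t ht => hC t ht.1)

lemma norm_f0_le {t : ℝ} (ht : 0 < t) : ‖f0 t‖ ≤ 1 := by
  rw [f0]
  by_cases h : t ∈ Ioc (0:ℝ) 1
  · rw [indicator_of_mem h]; exact norm_w_le_one ht
  · rw [indicator_of_notMem h]; simp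

lemma norm_f1_le {t : ℝ} (ht : 0 < t) : ‖f1 t‖ ≤ 2 := by
  rw [f1]
  by_cases h : t ∈ Ioi (1:ℝ)
  · rw [indicator_of_mem h]
    refine (norm_bose_le (le_of_lt h)).trans ?_
    have h0 := Real.exp_le_one_iff.mpr (by simp at h; linarith : -t ≤ 0)
    nlinarith [Real.exp_pos (-t)]
  · rw [indicator_of_notMem h]; simp

lemma norm_FF0_le {t : ℝ} (ht : 0 < t) : ‖FF0 t‖ ≤ 3 := by
  rw [FF0]
  by_cases h : t ∈ Ioc (0:ℝ) 1
  · rw [indicator_of_mem h]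
    have := norm_FF0_core ht h.2
    have h2 := h.2
    linarith
  · rw [indicator_of_notMem h]; simp

lemma norm_FF1_le {t : ℝ} (ht : 0 < t) : ‖FF1 t‖ ≤ 4 := by
  rw [FF1]
  by_cases h : t ∈ Ioi (1:ℝ)
  · rw [indicator_of_mem h, w2_add_inv_eq (ne_of_gt ht)]
    have h1 : (1:ℝ) ≤ 2*t := by simp at h; linarith
    have := norm_bose_le h1
    rw [norm_mul]
    simp only [Complex.norm_ofNat]
    have h0 := Real.exp_le_one_iff.mpr (by linarith : -(2*t) ≤ 0)
    nlinarith [norm_nonneg (bose (2*t)), Real.exp_pos (-(2*t))]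
  · rw [indicator_of_notMem h]; simp

lemma locInt_f0 : LocallyIntegrableOn f0 (Ioi 0) :=
  locInt measurable_f0 (fun t ht => norm_f0_le ht)
lemma locInt_f1 : LocallyIntegrableOn f1 (Ioi 0) :=
  locInt measurable_f1 (fun t ht => norm_f1_le ht)
lemma locInt_FF0 : LocallyIntegrableOn FF0 (Ioi 0) :=
  locInt measurable_FF0 (fun t ht => norm_FF0_le ht)
lemma locInt_FF1 : LocallyIntegrableOn FF1 (Ioi 0) :=
  locInt measurable_FF1 (fun t ht => norm_FF1_le ht)
lemma locInt_w2 : LocallyIntegrableOn w2 (Ioi 0) :=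
  locInt measurable_w2 (fun t ht => norm_w2_le_one ht)
lemma locInt_ind_Ioc_w2 : LocallyIntegrableOn ((Ioc (0:ℝ) 1).indicator w2) (Ioi 0) := by
  refine locInt (measurable_w2.indicator measurableSet_Ioc) (C := 1) (fun t ht => ?_)
  exact (norm_indicator_le_norm_self w2 t).trans (norm_w2_le_one ht)
lemma locInt_ind_Ioi_w2 : LocallyIntegrableOn ((Ioi (1:ℝ)).indicator w2) (Ioi 0) := by
  refine locInt (measurable_w2.indicator measurableSet_Ioi) (C := 1) (fun t ht => ?_)
  exact (norm_indicator_le_norm_self w2 t).trans (norm_w2_le_one ht)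

-- isBigO lemmas
lemma isBigO_top_of_zero {f : ℝ → ℂ} (hf : ∀ t : ℝ, 1 < t → f t = 0) (a : ℝ) :
    f =O[atTop] fun t : ℝ => t ^ (-a) := by
  rw [Asymptotics.isBigO_iff]
  refine ⟨1, ?_⟩
  filter_upwards [eventually_gt_atTop 1] with t ht
  rw [hf t ht]
  simp only [norm_zero, one_mul]
  positivity

lemma isBigO_bot_of_zero {f : ℝ → ℂ} (hf : ∀ t : ℝ, 0 < t → t < 1 → f t = 0) (b : ℝ) :
    f =O[𝓝[>] (0:ℝ)] fun t : ℝ => t ^ (-b) := by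
  rw [Asymptotics.isBigO_iff]
  refine ⟨1, ?_⟩
  filter_upwards [Ioo_mem_nhdsGT_of_mem (by norm_num : (0:ℝ) ∈ Ico (0:ℝ) 1)] with t ht
  rw [hf t ht.1 ht.2]
  simp only [norm_zero, one_mul]
  positivity

lemma isBigO_bot_of_bound {f : ℝ → ℂ} {c b : ℝ}
    (hf : ∀ t : ℝ, 0 < t → t < 1 → ‖f t‖ ≤ c * t ^ (-b)) :
    f =O[𝓝[>] (0:ℝ)] fun t : ℝ => t ^ (-b) := by
  rw [Asymptotics.isBigO_iff]
  refine ⟨c, ?_⟩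
  filter_upwards [Ioo_mem_nhdsGT_of_mem (by norm_num : (0:ℝ) ∈ Ico (0:ℝ) 1)] with t ht
  refine (hf t ht.1 ht.2).trans ?_
  rw [Real.norm_eq_abs, _root_.abs_of_nonneg (Real.rpow_nonneg ht.1.le _)]

lemma isBigO_top_of_bound {f : ℝ → ℂ} {c a : ℝ}
    (hf : ∀ t : ℝ, 1 < t → ‖f t‖ ≤ c * t ^ (-a)) :
    f =O[atTop] fun t : ℝ => t ^ (-a) := by
  rw [Asymptotics.isBigO_iff]
  refine ⟨c, ?_⟩
  filter_upwards [eventually_gt_atTop 1] with t ht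
  refine (hf t ht).trans ?_
  rw [Real.norm_eq_abs, _root_.abs_of_nonneg (Real.rpow_nonneg (by linarith) _)]

lemma isBigO_f0_top (a : ℝ) : f0 =O[atTop] fun t : ℝ => t ^ (-a) :=
  isBigO_top_of_zero
    (fun t ht => indicator_of_notMem (fun h => absurd h.2 (not_le.mpr ht)) _) a

lemma isBigO_f0_bot : f0 =O[𝓝[>] (0:ℝ)] fun t : ℝ => t ^ (-(0:ℝ)) := by
  refine isBigO_bot_of_bound (c := 1) (fun t ht _ => ?_)
  rw [neg_zero, Real.rpow_zero, mul_one]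
  exact norm_f0_le ht

lemma isBigO_FF0_top (a : ℝ) : FF0 =O[atTop] fun t : ℝ => t ^ (-a) :=
  isBigO_top_of_zero
    (fun t ht => indicator_of_notMem (fun h => absurd h.2 (not_le.mpr ht)) _) a

lemma isBigO_FF0_bot : FF0 =O[𝓝[>] (0:ℝ)] fun t : ℝ => t ^ (-(-1:ℝ)) := by
  refine isBigO_bot_of_bound (c := 3) (fun t ht ht1 => ?_)
  rw [neg_neg, Real.rpow_one]
  rw [FF0, indicator_of_mem (mem_Ioc.mpr ⟨ht, ht1.le⟩)]
  exact norm_FF0_core ht ht1.le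

lemma isBigO_f1_top : f1 =O[atTop] fun t : ℝ => Real.exp (-1 * t) := by
  rw [Asymptotics.isBigO_iff]
  refine ⟨2, ?_⟩
  filter_upwards [eventually_gt_atTop 1] with t ht
  rw [f1, indicator_of_mem (mem_Ioi.mpr ht)]
  rw [Real.norm_eq_abs, Real.abs_exp, neg_one_mul]
  exact norm_bose_le ht.le

lemma isBigO_f1_bot (b : ℝ) : f1 =O[𝓝[>] (0:ℝ)] fun t : ℝ => t ^ (-b) :=
  isBigO_bot_of_zero
    (fun t _ ht1 => indicator_of_notMem (notMem_Ioi.mpr ht1.le) _) b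

lemma isBigO_FF1_top : FF1 =O[atTop] fun t : ℝ => Real.exp (-1 * t) := by
  rw [Asymptotics.isBigO_iff]
  refine ⟨4, ?_⟩
  filter_upwards [eventually_gt_atTop 1] with t ht
  rw [FF1, indicator_of_mem (mem_Ioi.mpr ht), w2_add_inv_eq (by linarith)]
  rw [Real.norm_eq_abs, Real.abs_exp, neg_one_mul, norm_mul]
  simp only [Complex.norm_ofNat]
  have h1 : (1:ℝ) ≤ 2*t := by linarith
  have h2 := norm_bose_le h1
  have h3 : Real.exp (-(2*t)) ≤ Real.exp (-t) := Real.exp_le_exp.mpr (by linarith)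
  nlinarith [norm_nonneg (bose (2*t))]

lemma isBigO_FF1_bot (b : ℝ) : FF1 =O[𝓝[>] (0:ℝ)] fun t : ℝ => t ^ (-b) :=
  isBigO_bot_of_zero
    (fun t _ ht1 => indicator_of_notMem (notMem_Ioi.mpr ht1.le) _) b

lemma isBigO_w2_top : w2 =O[atTop] fun t : ℝ => t ^ (-(1:ℝ)) := by
  refine isBigO_top_of_bound (c := 1) (fun t ht => ?_)
  rw [Real.rpow_neg_one, one_mul, ← one_div]
  exact norm_w2_le_inv (by linarith)

lemma isBigO_w2_bot : w2 =O[𝓝[>] (0:ℝ)] fun t : ℝ => t ^ (-(0:ℝ)) := by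
  refine isBigO_bot_of_bound (c := 1) (fun t ht _ => ?_)
  rw [neg_zero, Real.rpow_zero, mul_one]
  exact norm_w2_le_one ht

lemma isBigO_ind_Ioc_w2_top (a : ℝ) :
    ((Ioc (0:ℝ) 1).indicator w2) =O[atTop] fun t : ℝ => t ^ (-a) :=
  isBigO_top_of_zero
    (fun t ht => indicator_of_notMem (fun h => absurd h.2 (not_le.mpr ht)) _) a

lemma isBigO_ind_Ioc_w2_bot : ((Ioc (0:ℝ) 1).indicator w2) =O[𝓝[>] (0:ℝ)]
    fun t : ℝ => t ^ (-(0:ℝ)) := by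
  refine isBigO_bot_of_bound (c := 1) (fun t ht _ => ?_)
  rw [neg_zero, Real.rpow_zero, mul_one]
  exact (norm_indicator_le_norm_self w2 t).trans (norm_w2_le_one ht)

lemma isBigO_ind_Ioi_w2_top : ((Ioi (1:ℝ)).indicator w2) =O[atTop]
    fun t : ℝ => t ^ (-(1:ℝ)) := by
  refine isBigO_top_of_bound (c := 1) (fun t ht => ?_)
  rw [Real.rpow_neg_one, one_mul, ← one_div]
  exact (norm_indicator_le_norm_self w2 t).trans (norm_w2_le_inv (by linarith))

lemma isBigO_ind_Ioi_w2_bot (b : ℝ) : ((Ioi (1:ℝ)).indicator w2) =O[𝓝[>] (0:ℝ)]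
    fun t : ℝ => t ^ (-b) :=
  isBigO_bot_of_zero
    (fun t _ ht1 => indicator_of_notMem (notMem_Ioi.mpr ht1.le) _) b

-- Mellin convergence
lemma mc_f0 {s : ℂ} (hs : 0 < s.re) : MellinConvergent f0 s :=
  mellinConvergent_of_isBigO_rpow locInt_f0 (isBigO_f0_top (s.re + 1)) (lt_add_one _)
    isBigO_f0_bot hs

lemma mc_f1 (s : ℂ) : MellinConvergent f1 s :=
  mellinConvergent_of_isBigO_rpow_exp one_pos locInt_f1
    (by simpa using isBigO_f1_top) (isBigO_f1_bot (s.re - 1)) (sub_one_lt _)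

lemma mc_FF0 {s : ℂ} (hs : -1 < s.re) : MellinConvergent FF0 s :=
  mellinConvergent_of_isBigO_rpow locInt_FF0 (isBigO_FF0_top (s.re + 1)) (lt_add_one _)
    isBigO_FF0_bot hs

lemma mc_FF1 (s : ℂ) : MellinConvergent FF1 s :=
  mellinConvergent_of_isBigO_rpow_exp one_pos locInt_FF1
    (by simpa using isBigO_FF1_top) (isBigO_FF1_bot (s.re - 1)) (sub_one_lt _)

lemma mc_w2 {s : ℂ} (hs0 : 0 < s.re) (hs1 : s.re < 1) : MellinConvergent w2 s :=
  mellinConvergent_of_isBigO_rpow locInt_w2 isBigO_w2_top hs1 isBigO_w2_bot hs0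

lemma mc_ind_Ioc_w2 {s : ℂ} (hs : 0 < s.re) :
    MellinConvergent ((Ioc (0:ℝ) 1).indicator w2) s :=
  mellinConvergent_of_isBigO_rpow locInt_ind_Ioc_w2 (isBigO_ind_Ioc_w2_top (s.re + 1))
    (lt_add_one _) isBigO_ind_Ioc_w2_bot hs

lemma mc_ind_Ioi_w2 {s : ℂ} (hs1 : s.re < 1) :
    MellinConvergent ((Ioi (1:ℝ)).indicator w2) s :=
  mellinConvergent_of_isBigO_rpow locInt_ind_Ioi_w2 isBigO_ind_Ioi_w2_top hs1
    (isBigO_ind_Ioi_w2_bot (s.re - 1)) (sub_one_lt _)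

-- differentiability
lemma diff_mellin_f0 {s : ℂ} (hs : 0 < s.re) : DifferentiableAt ℂ (mellin f0) s :=
  mellin_differentiableAt_of_isBigO_rpow locInt_f0 (isBigO_f0_top (s.re + 1)) (lt_add_one _)
    isBigO_f0_bot hs

lemma diff_mellin_f1 (s : ℂ) : DifferentiableAt ℂ (mellin f1) s :=
  mellin_differentiableAt_of_isBigO_rpow_exp one_pos locInt_f1
    (by simpa using isBigO_f1_top) (isBigO_f1_bot (s.re - 1)) (sub_one_lt _)

lemma diff_mellin_FF0 {s : ℂ} (hs : -1 < s.re) : DifferentiableAt ℂ (mellin FF0) s :=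
  mellin_differentiableAt_of_isBigO_rpow locInt_FF0 (isBigO_FF0_top (s.re + 1)) (lt_add_one _)
    isBigO_FF0_bot hs

lemma diff_mellin_FF1 (s : ℂ) : DifferentiableAt ℂ (mellin FF1) s :=
  mellin_differentiableAt_of_isBigO_rpow_exp one_pos locInt_FF1
    (by simpa using isBigO_FF1_top) (isBigO_FF1_bot (s.re - 1)) (sub_one_lt _)



/-! ### Step 1 : mellin of bose equals Gamma * zeta -/

lemma hasSum_bose {t : ℝ} (ht : 0 < t) :
    HasSum (fun n : ℕ => ((Real.exp (-(((n:ℝ)+1)) * t) : ℝ) : ℂ)) (bose t) := by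
  rw [bose, hasSum_ofReal]
  have hr0 : (0:ℝ) ≤ Real.exp (-t) := (Real.exp_pos _).le
  have hr1 : Real.exp (-t) < 1 := Real.exp_lt_one_iff.mpr (by linarith)
  have h := (hasSum_geometric_of_lt_one hr0 hr1).mul_right (Real.exp (-t))
  have hfun : ∀ n : ℕ, Real.exp (-t) ^ n * Real.exp (-t) = Real.exp (-(((n:ℝ)+1)) * t) := by
    intro n
    rw [← Real.exp_nat_mul, ← Real.exp_add]
    ring_nf
  have hval : (1 - Real.exp (-t))⁻¹ * Real.exp (-t) = 1 / (Real.exp t - 1) := by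
    have h1 : Real.exp t - 1 > 0 := exp_sub_one_pos ht
    have h2 : Real.exp (-t) = (Real.exp t)⁻¹ := Real.exp_neg t
    have h3 : Real.exp t ≠ 0 := (Real.exp_pos t).ne'
    rw [h2]
    field_simp
  rw [← hval]
  exact h.congr_fun (fun n => (hfun n).symm)

lemma mellin_bose_eq {s : ℂ} (hs : 1 < s.re) :
    mellin bose s = Complex.Gamma s * riemannZeta s := by
  have hs0 : 0 < s.re := by linarith
  have key := hasSum_mellin (ι := ℕ) (a := fun _ => (1:ℂ)) (p := fun n => (n:ℝ)+1)
    (F := bose) (s := s) (fun i => Or.inr (by positivity)) hs0 ?_ ?_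
  · have h1 : mellin bose s = ∑' n : ℕ, Complex.Gamma s * 1 / (((n:ℝ)+1 : ℝ):ℂ) ^ s :=
      key.tsum_eq.symm
    rw [h1, zeta_eq_tsum_one_div_nat_add_one_cpow hs, ← tsum_mul_left]
    congr 1
    funext n
    push_cast
    rw [mul_one, mul_one_div]
  · intro t ht
    exact (hasSum_bose ht).congr_fun (fun n => by rw [one_mul])
  · simp only [norm_one]
    have h := Real.summable_one_div_nat_rpow.mpr hs
    have h2 := (summable_nat_add_iff (f := fun n : ℕ => 1 / (n:ℝ) ^ s.re) 1).mpr h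
    refine h2.congr (fun n => ?_)
    push_cast
    ring_nf

/-! ### Step 2 : splitting mellin bose -/

lemma cpow_neg_one_eq {t : ℝ} (ht : 0 < t) : ((t:ℝ):ℂ) ^ (-1 : ℂ) = ((t:ℝ):ℂ)⁻¹ := by
  rw [cpow_neg_one]

lemma bose_eq_w_add_inv {t : ℝ} (ht : 0 < t) : bose t = w t + ((t:ℝ):ℂ)⁻¹ := by
  rw [bose, w, vR]
  push_cast
  ring

lemma mellin_bose_split {s : ℂ} (hs : 1 < s.re) :
    mellin bose s = mellin f0 s + mellin f1 s + 1 / (s - 1) := by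
  have hs0 : 0 < s.re := by linarith
  have hc : HasMellin (indicator (Ioc (0:ℝ) 1) (fun t => ((t:ℝ):ℂ) ^ (-1 : ℂ))) s (1 / (s + (-1))) :=
    hasMellin_cpow_Ioc (-1) (by simp; linarith)
  have key : EqOn (fun t : ℝ => ((t:ℝ):ℂ) ^ (s-1) • bose t)
      (fun t : ℝ => (((t:ℝ):ℂ) ^ (s-1) • f0 t
        + ((t:ℝ):ℂ) ^ (s-1) • (Ioc (0:ℝ) 1).indicator (fun u => ((u:ℝ):ℂ) ^ (-1 : ℂ)) t)
        + ((t:ℝ):ℂ) ^ (s-1) • f1 t) (Ioi 0) := by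
    intro t ht
    simp only
    rw [← smul_add, ← smul_add]
    congr 1
    rcases le_or_gt t 1 with h1 | h1
    · have hmem : t ∈ Ioc (0:ℝ) 1 := ⟨ht, h1⟩
      rw [f0, f1, indicator_of_mem hmem, indicator_of_mem hmem,
        indicator_of_notMem (by simp [not_lt.mpr h1] : t ∉ Ioi (1:ℝ)), add_zero,
        cpow_neg_one_eq ht]
      exact bose_eq_w_add_inv ht
    · have hmem : t ∉ Ioc (0:ℝ) 1 := fun h => absurd h.2 (not_le.mpr h1)
      rw [f0, f1, indicator_of_notMem hmem, indicator_of_notMem hmem,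
        indicator_of_mem (mem_Ioi.mpr h1), add_zero, zero_add]
  have mi0 : IntegrableOn (fun t : ℝ => ((t:ℝ):ℂ) ^ (s-1) • f0 t) (Ioi 0) := mc_f0 hs0
  have mi1 : IntegrableOn (fun t : ℝ => ((t:ℝ):ℂ) ^ (s-1) • f1 t) (Ioi 0) := mc_f1 s
  have mic : IntegrableOn (fun t : ℝ =>
      ((t:ℝ):ℂ) ^ (s-1) • (Ioc (0:ℝ) 1).indicator (fun u => ((u:ℝ):ℂ) ^ (-1 : ℂ)) t) (Ioi 0) :=
    hc.1
  calc mellin bose s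
      = ∫ t in Ioi (0:ℝ), (((t:ℝ):ℂ) ^ (s-1) • f0 t
        + ((t:ℝ):ℂ) ^ (s-1) • (Ioc (0:ℝ) 1).indicator (fun u => ((u:ℝ):ℂ) ^ (-1 : ℂ)) t)
        + ((t:ℝ):ℂ) ^ (s-1) • f1 t := setIntegral_congr_fun measurableSet_Ioi key
    _ = (∫ t in Ioi (0:ℝ), ((t:ℝ):ℂ) ^ (s-1) • f0 t
        + ((t:ℝ):ℂ) ^ (s-1) • (Ioc (0:ℝ) 1).indicator (fun u => ((u:ℝ):ℂ) ^ (-1 : ℂ)) t)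
        + ∫ t in Ioi (0:ℝ), ((t:ℝ):ℂ) ^ (s-1) • f1 t := integral_add (mi0.add mic) mi1
    _ = mellin f0 s + mellin (indicator (Ioc (0:ℝ) 1) (fun u => ((u:ℝ):ℂ) ^ (-1 : ℂ))) s
        + mellin f1 s := by rw [integral_add mi0 mic]; rfl
    _ = mellin f0 s + (1 / (s + (-1))) + mellin f1 s := by rw [hc.2]
    _ = mellin f0 s + mellin f1 s + 1 / (s - 1) := by
        rw [sub_eq_add_neg]
        ring



lemma U_open : IsOpen {z : ℂ | 0 < z.re ∧ z ≠ 1} := by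
  refine IsOpen.inter (isOpen_lt continuous_const continuous_re) isOpen_compl_singleton

lemma U_preconnected : IsPreconnected {z : ℂ | 0 < z.re ∧ z ≠ 1} := by
  classical
  set A : Set ℂ := {z | 0 < z.re} ∩ {z | z.re < 1} with hA_def
  set B : Set ℂ := {z | 1 < z.re} with hB_def
  set Cp : Set ℂ := {z | 0 < z.re} ∩ {z | 0 < z.im} with hCp_def
  set Cm : Set ℂ := {z | 0 < z.re} ∩ {z | z.im < 0} with hCm_def
  have hA : IsPreconnected A :=
    ((convex_halfSpace_re_gt 0).inter (convex_halfSpace_re_lt 1)).isPreconnected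
  have hB : IsPreconnected B := (convex_halfSpace_re_gt 1).isPreconnected
  have hCp : IsPreconnected Cp :=
    ((convex_halfSpace_re_gt 0).inter (convex_halfSpace_im_gt 0)).isPreconnected
  have hCm : IsPreconnected Cm :=
    ((convex_halfSpace_re_gt 0).inter (convex_halfSpace_im_lt 0)).isPreconnected
  have h1 : IsPreconnected (A ∪ Cp) := by
    refine IsPreconnected.union (⟨1/2, 1/2⟩ : ℂ) ?_ ?_ hA hCp
    · exact ⟨by norm_num, by norm_num⟩
    · exact ⟨by norm_num, by norm_num⟩
  have h2 : IsPreconnected ((A ∪ Cp) ∪ B) := by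
    refine IsPreconnected.union (⟨2, 1⟩ : ℂ) ?_ ?_ h1 hB
    · exact Or.inr ⟨by norm_num, by norm_num⟩
    · show (1:ℝ) < 2; norm_num
  have h3 : IsPreconnected (((A ∪ Cp) ∪ B) ∪ Cm) := by
    refine IsPreconnected.union (⟨1/2, -1/2⟩ : ℂ) ?_ ?_ h2 hCm
    · exact Or.inl (Or.inl ⟨by norm_num, by norm_num⟩)
    · exact ⟨by norm_num, by norm_num⟩
  have hset : {z : ℂ | 0 < z.re ∧ z ≠ 1} = ((A ∪ Cp) ∪ B) ∪ Cm := by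
    ext z
    simp only [hA_def, hB_def, hCp_def, hCm_def, mem_setOf_eq, mem_union, mem_inter_iff]
    constructor
    · rintro ⟨h0, hne⟩
      rcases lt_trichotomy z.re 1 with h | h | h
      · exact Or.inl (Or.inl (Or.inl ⟨h0, h⟩))
      · have him : z.im ≠ 0 := by
          intro h'
          exact hne (Complex.ext (by rw [h, Complex.one_re]) (by rw [h', Complex.one_im]))
        rcases him.lt_or_gt with h' | h'
        · exact Or.inr ⟨h0, h'⟩
        · exact Or.inl (Or.inl (Or.inr ⟨h0, h'⟩))
      · exact Or.inl (Or.inr h)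
    · rintro (((⟨h0, h⟩ | ⟨h0, h⟩) | h) | ⟨h0, h⟩)
      · exact ⟨h0, fun he => by rw [he, Complex.one_re] at h; exact lt_irrefl _ h⟩
      · exact ⟨h0, fun he => by rw [he, Complex.one_im] at h; exact lt_irrefl _ h⟩
      · refine ⟨by linarith, fun he => by rw [he, Complex.one_re] at h; exact lt_irrefl _ h⟩
      · exact ⟨h0, fun he => by rw [he, Complex.one_im] at h; exact lt_irrefl _ h⟩
  rw [hset]
  exact h3

lemma G_eq {s : ℂ} (hs0 : 0 < s.re) (hs1 : s ≠ 1) :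
    mellin f0 s + mellin f1 s + 1 / (s - 1) = Complex.Gamma s * riemannZeta s := by
  set U : Set ℂ := {z | 0 < z.re ∧ z ≠ 1} with hU_def
  have hUo : IsOpen U := U_open
  have hUp : IsPreconnected U := U_preconnected
  have hF : AnalyticOnNhd ℂ (fun z => mellin f0 z + mellin f1 z + 1/(z-1)) U := by
    refine DifferentiableOn.analyticOnNhd (fun z hz => DifferentiableAt.differentiableWithinAt ?_) hUo
    refine ((diff_mellin_f0 hz.1).add (diff_mellin_f1 z)).add ?_
    exact (differentiableAt_const 1).div (differentiableAt_id.sub_const 1)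
      (sub_ne_zero.mpr hz.2)
  have hG : AnalyticOnNhd ℂ (fun z => Complex.Gamma z * riemannZeta z) U := by
    refine DifferentiableOn.analyticOnNhd (fun z hz => DifferentiableAt.differentiableWithinAt ?_) hUo
    refine (Complex.differentiableAt_Gamma z fun n => ?_).mul (differentiableAt_riemannZeta hz.2)
    intro h
    have := hz.1
    rw [h] at this
    simp only [Complex.neg_re, Complex.natCast_re] at this
    have : (n:ℝ) < 0 := by linarith
    exact absurd this (not_lt.mpr (Nat.cast_nonneg n))
  have h2U : (2:ℂ) ∈ U := by
    constructor
    · show (0:ℝ) < (2:ℂ).re; norm_num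
    · norm_num
  have hV : {z : ℂ | 1 < z.re} ∈ 𝓝 (2:ℂ) := by
    refine (isOpen_lt continuous_const continuous_re).mem_nhds ?_
    show (1:ℝ) < (2:ℂ).re; norm_num
  have hFG : (fun z => mellin f0 z + mellin f1 z + 1/(z-1))
      =ᶠ[𝓝 (2:ℂ)] (fun z => Complex.Gamma z * riemannZeta z) := by
    filter_upwards [hV] with z hz
    rw [← mellin_bose_split hz, mellin_bose_eq hz]
  exact hF.eqOn_of_preconnected_of_eventuallyEq hG hUp h2U hFG ⟨hs0, hs1⟩

/-! ### the strip identity -/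

lemma integral_ind_inv_Ioi {s : ℂ} (hs1 : s.re < 1) :
    HasMellin ((Ioi (1:ℝ)).indicator (fun u : ℝ => ((u:ℝ):ℂ)⁻¹)) s (1 / (1 - s)) := by
  have hs2 : (s - 2).re < -1 := by
    simp only [Complex.sub_re, Complex.re_ofNat]
    linarith
  have hsne1 : s - 1 ≠ 0 := by
    intro h
    have : s = 1 := by linear_combination h
    rw [this] at hs1
    simp at hs1
  have hpt : ∀ t : ℝ, t ∈ Ioi (1:ℝ) → ((t:ℝ):ℂ) ^ (s-1) * ((t:ℝ):ℂ)⁻¹ = ((t:ℝ):ℂ) ^ (s-2) := by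
    intro t ht
    have ht0 : (0:ℝ) < t := lt_trans zero_lt_one ht
    have htne : ((t:ℝ):ℂ) ≠ 0 := ofReal_ne_zero.mpr ht0.ne'
    rw [← cpow_neg_one ((t:ℝ):ℂ), ← cpow_add _ _ htne]
    congr 1
    ring
  have hio : IntegrableOn (fun t : ℝ => ((t:ℝ):ℂ) ^ (s-2)) (Ioi 1) :=
    integrableOn_Ioi_cpow_of_lt hs2 one_pos
  have hio' : IntegrableOn (fun t : ℝ => ((t:ℝ):ℂ) ^ (s-1) * ((t:ℝ):ℂ)⁻¹) (Ioi 1) :=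
    hio.congr_fun (fun t ht => (hpt t ht).symm) measurableSet_Ioi
  have heqind : (fun t : ℝ => ((t:ℝ):ℂ) ^ (s-1) • (Ioi (1:ℝ)).indicator (fun u : ℝ => ((u:ℝ):ℂ)⁻¹) t)
      = (Ioi (1:ℝ)).indicator (fun t : ℝ => ((t:ℝ):ℂ) ^ (s-1) * ((t:ℝ):ℂ)⁻¹) := by
    funext t
    by_cases h : t ∈ Ioi (1:ℝ)
    · rw [indicator_of_mem h, indicator_of_mem h, smul_eq_mul]
    · rw [indicator_of_notMem h, indicator_of_notMem h, smul_zero]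
  constructor
  · rw [MellinConvergent, heqind]
    exact (hio'.integrable_indicator measurableSet_Ioi).integrableOn
  · rw [mellin, heqind, setIntegral_indicator measurableSet_Ioi]
    have hinter : Ioi (0:ℝ) ∩ Ioi 1 = Ioi 1 := by
      rw [Ioi_inter_Ioi]
      norm_num
    rw [hinter, setIntegral_congr_fun measurableSet_Ioi hpt,
      integral_Ioi_cpow_of_lt hs2 one_pos]
    rw [ofReal_one, one_cpow]
    have h1s : (1:ℂ) - s ≠ 0 := fun h => hsne1 (by linear_combination -h)
    have h2s : s - 2 + 1 = -(1 - s) := by ring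
    rw [h2s]
    field_simp

lemma key_strip {s : ℂ} (hs0 : 0 < s.re) (hs1 : s.re < 1) :
    mellin FF0 s + mellin FF1 s
      = (2:ℂ) ^ ((1:ℂ) - s) * (Complex.Gamma s * riemannZeta s) + 1/s + 1/(1-s) := by
  have hsne1 : s ≠ 1 := by
    intro h; rw [h] at hs1; simp at hs1
  have hone := hasMellin_one_Ioc (s := s) hs0
  have hinv := integral_ind_inv_Ioi hs1
  -- (a) mellin FF0
  have ha : mellin FF0 s = 2 * mellin ((Ioc (0:ℝ) 1).indicator w2) s + 1/s := by
    have key : EqOn (fun t : ℝ => ((t:ℝ):ℂ) ^ (s-1) • FF0 t)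
        (fun t : ℝ => 2 * (((t:ℝ):ℂ) ^ (s-1) • (Ioc (0:ℝ) 1).indicator w2 t)
          + ((t:ℝ):ℂ) ^ (s-1) • (Ioc (0:ℝ) 1).indicator (fun _ => (1:ℂ)) t) (Ioi 0) := by
      intro t ht
      simp only
      by_cases h : t ∈ Ioc (0:ℝ) 1
      · rw [FF0, indicator_of_mem h, indicator_of_mem h, indicator_of_mem h,
          smul_eq_mul, smul_eq_mul, smul_eq_mul, w2_def]
        ring
      · rw [FF0, indicator_of_notMem h, indicator_of_notMem h, indicator_of_notMem h]
        simp
    rw [mellin, setIntegral_congr_fun measurableSet_Ioi key,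
      integral_add ((mc_ind_Ioc_w2 hs0).const_mul 2) hone.1, integral_const_mul]
    rw [show (∫ t in Ioi (0:ℝ), ((t:ℝ):ℂ) ^ (s-1) • (Ioc (0:ℝ) 1).indicator (fun _ => (1:ℂ)) t)
      = mellin ((Ioc (0:ℝ) 1).indicator (fun _ => (1:ℂ))) s from rfl, hone.2]
    rfl
  -- (b) mellin FF1
  have hb : mellin FF1 s = 2 * mellin ((Ioi (1:ℝ)).indicator w2) s + 1/(1-s) := by
    have key : EqOn (fun t : ℝ => ((t:ℝ):ℂ) ^ (s-1) • FF1 t)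
        (fun t : ℝ => 2 * (((t:ℝ):ℂ) ^ (s-1) • (Ioi (1:ℝ)).indicator w2 t)
          + ((t:ℝ):ℂ) ^ (s-1) • (Ioi (1:ℝ)).indicator (fun u : ℝ => ((u:ℝ):ℂ)⁻¹) t) (Ioi 0) := by
      intro t ht
      simp only
      by_cases h : t ∈ Ioi (1:ℝ)
      · rw [FF1, indicator_of_mem h, indicator_of_mem h, indicator_of_mem h,
          smul_eq_mul, smul_eq_mul, smul_eq_mul, w2_def]
        ring
      · rw [FF1, indicator_of_notMem h, indicator_of_notMem h, indicator_of_notMem h]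
        simp
    rw [mellin, setIntegral_congr_fun measurableSet_Ioi key,
      integral_add ((mc_ind_Ioi_w2 hs1).const_mul 2) hinv.1, integral_const_mul]
    rw [show (∫ t in Ioi (0:ℝ), ((t:ℝ):ℂ) ^ (s-1) •
        (Ioi (1:ℝ)).indicator (fun u : ℝ => ((u:ℝ):ℂ)⁻¹) t)
      = mellin ((Ioi (1:ℝ)).indicator (fun u : ℝ => ((u:ℝ):ℂ)⁻¹)) s from rfl, hinv.2]
    rfl
  -- (c) sum of indicator pieces is mellin w2
  have hc : mellin ((Ioc (0:ℝ) 1).indicator w2) s + mellin ((Ioi (1:ℝ)).indicator w2) s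
      = mellin w2 s := by
    have key : EqOn (fun t : ℝ => ((t:ℝ):ℂ) ^ (s-1) • w2 t)
        (fun t : ℝ => ((t:ℝ):ℂ) ^ (s-1) • (Ioc (0:ℝ) 1).indicator w2 t
          + ((t:ℝ):ℂ) ^ (s-1) • (Ioi (1:ℝ)).indicator w2 t) (Ioi 0) := by
      intro t ht
      simp only
      rcases le_or_gt t 1 with h1 | h1
      · rw [indicator_of_mem (mem_Ioc.mpr ⟨ht, h1⟩),
          indicator_of_notMem (by simp [not_lt.mpr h1] : t ∉ Ioi (1:ℝ)), smul_zero, add_zero]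
      · rw [indicator_of_notMem (fun hh => absurd hh.2 (not_le.mpr h1)),
          indicator_of_mem (mem_Ioi.mpr h1), smul_zero, zero_add]
    rw [show mellin w2 s = ∫ t in Ioi (0:ℝ), ((t:ℝ):ℂ) ^ (s-1) • w2 t from rfl,
      setIntegral_congr_fun measurableSet_Ioi key,
      integral_add (mc_ind_Ioc_w2 hs0) (mc_ind_Ioi_w2 hs1)]
    rfl
  -- (d) scaling
  have hd : mellin w2 s = ((2:ℝ):ℂ) ^ (-s) • mellin w s := mellin_comp_mul_left w s two_pos
  -- (e) mellin w
  have he : mellin w s = mellin f0 s + mellin f1 s - 1/(1-s) := by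
    have key : EqOn (fun t : ℝ => ((t:ℝ):ℂ) ^ (s-1) • w t)
        (fun t : ℝ => (((t:ℝ):ℂ) ^ (s-1) • f0 t + ((t:ℝ):ℂ) ^ (s-1) • f1 t)
          - ((t:ℝ):ℂ) ^ (s-1) • (Ioi (1:ℝ)).indicator (fun u : ℝ => ((u:ℝ):ℂ)⁻¹) t) (Ioi 0) := by
      intro t ht
      simp only
      rw [← smul_add, ← smul_sub]
      congr 1
      rcases le_or_gt t 1 with h1 | h1
      · rw [f0, f1, indicator_of_mem (mem_Ioc.mpr ⟨ht, h1⟩),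
          indicator_of_notMem (by simp [not_lt.mpr h1] : t ∉ Ioi (1:ℝ)),
          indicator_of_notMem (by simp [not_lt.mpr h1] : t ∉ Ioi (1:ℝ)), add_zero, sub_zero]
      · rw [f0, f1, indicator_of_notMem (fun hh => absurd hh.2 (not_le.mpr h1)),
          indicator_of_mem (mem_Ioi.mpr h1), indicator_of_mem (mem_Ioi.mpr h1), zero_add]
        rw [bose_eq_w_add_inv (lt_trans zero_lt_one h1 : (0:ℝ) < t)]
        ring
    have hadd : IntegrableOn
        (fun t : ℝ => ((t:ℝ):ℂ) ^ (s-1) • f0 t + ((t:ℝ):ℂ) ^ (s-1) • f1 t) (Ioi 0) :=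
      (mc_f0 hs0).add (mc_f1 s)
    rw [show mellin w s = ∫ t in Ioi (0:ℝ), ((t:ℝ):ℂ) ^ (s-1) • w t from rfl,
      setIntegral_congr_fun measurableSet_Ioi key,
      integral_sub hadd hinv.1,
      integral_add (mc_f0 hs0) (mc_f1 s)]
    rw [show (∫ t in Ioi (0:ℝ), ((t:ℝ):ℂ) ^ (s-1) •
        (Ioi (1:ℝ)).indicator (fun u : ℝ => ((u:ℝ):ℂ)⁻¹) t)
      = mellin ((Ioi (1:ℝ)).indicator (fun u : ℝ => ((u:ℝ):ℂ)⁻¹)) s from rfl, hinv.2]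
    rfl
  -- combine
  have hG := G_eq hs0 hsne1
  have hzero : 1 / (s-1) + 1/(1-s) = 0 := by
    have h1 : s - 1 ≠ 0 := sub_ne_zero.mpr hsne1
    have h2 : (1:ℂ) - s ≠ 0 := fun h => h1 (by linear_combination -h)
    field_simp
    ring
  have hfull : mellin f0 s + mellin f1 s - 1/(1-s) = Complex.Gamma s * riemannZeta s := by
    rw [← hG]; linear_combination -hzero
  have hpow : (2:ℂ) ^ ((1:ℂ) - s) = 2 * (2:ℂ) ^ (-s) := by
    rw [sub_eq_add_neg, cpow_add _ _ two_ne_zero, cpow_one]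
  rw [ha, hb, show ((2:ℝ):ℂ) = (2:ℂ) from by norm_num] at *
  rw [hpow]
  rw [smul_eq_mul] at hd
  calc 2 * mellin ((Ioc (0:ℝ) 1).indicator w2) s + 1/s
        + (2 * mellin ((Ioi (1:ℝ)).indicator w2) s + 1/(1-s))
      = 2 * (mellin ((Ioc (0:ℝ) 1).indicator w2) s + mellin ((Ioi (1:ℝ)).indicator w2) s)
        + 1/s + 1/(1-s) := by ring
    _ = 2 * mellin w2 s + 1/s + 1/(1-s) := by rw [hc]
    _ = 2 * ((2:ℂ) ^ (-s) * mellin w s) + 1/s + 1/(1-s) := by rw [hd]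
    _ = 2 * (2:ℂ) ^ (-s) * (Complex.Gamma s * riemannZeta s) + 1/s + 1/(1-s) := by
        rw [he, hfull]; ring
    _ = _ := by ring



noncomputable def EE (z : ℂ) : ℂ :=
  (2:ℂ) ^ ((1:ℂ) - z) * 2 * (2 * (Real.pi:ℂ)) ^ (z - 1) * Complex.Gamma (1 + z)
    * Complex.Gamma (1 - z)

lemma two_pi_ne : (2 * (Real.pi:ℂ)) ≠ 0 := by
  apply mul_ne_zero two_ne_zero
  exact_mod_cast Real.pi_ne_zero

lemma EE_zero : EE 0 = 2 / (Real.pi:ℂ) := by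
  have hπ : (Real.pi:ℂ) ≠ 0 := by exact_mod_cast Real.pi_ne_zero
  simp only [EE, sub_zero, add_zero, zero_sub, cpow_one, cpow_neg_one, Complex.Gamma_one]
  field_simp

lemma hasDerivAt_EE : HasDerivAt EE
    ((2:ℂ) / (Real.pi:ℂ) * (Complex.log (2 * (Real.pi:ℂ)) - Complex.log 2)) 0 := by
  have hπ : (Real.pi:ℂ) ≠ 0 := by exact_mod_cast Real.pi_ne_zero
  have h1 : HasDerivAt (fun z : ℂ => (2:ℂ) ^ ((1:ℂ) - z))
      ((2:ℂ) ^ ((1:ℂ) - 0) * Complex.log 2 * (-1)) 0 :=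
    ((hasDerivAt_id (0:ℂ)).const_sub 1).const_cpow (Or.inl two_ne_zero)
  have h3 : HasDerivAt (fun z : ℂ => (2 * (Real.pi:ℂ)) ^ (z - 1))
      ((2 * (Real.pi:ℂ)) ^ ((0:ℂ) - 1) * Complex.log (2 * (Real.pi:ℂ)) * 1) 0 :=
    ((hasDerivAt_id (0:ℂ)).sub_const 1).const_cpow (Or.inl two_pi_ne)
  have hg4 : HasDerivAt Complex.Gamma (-(Real.eulerMascheroniConstant:ℂ)) ((1:ℂ) + 0) := by
    rw [add_zero]; exact Complex.hasDerivAt_Gamma_one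
  have h4 : HasDerivAt (fun z : ℂ => Complex.Gamma (1 + z))
      (-(Real.eulerMascheroniConstant:ℂ)) 0 := by
    have := hg4.comp 0 ((hasDerivAt_id (0:ℂ)).const_add 1)
    simp only [mul_one, mul_neg, neg_neg] at this
    exact this
  have hg5 : HasDerivAt Complex.Gamma (-(Real.eulerMascheroniConstant:ℂ)) ((1:ℂ) - 0) := by
    rw [sub_zero]; exact Complex.hasDerivAt_Gamma_one
  have h5 : HasDerivAt (fun z : ℂ => Complex.Gamma (1 - z))
      ((Real.eulerMascheroniConstant:ℂ)) 0 := by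
    have := hg5.comp 0 ((hasDerivAt_id (0:ℂ)).const_sub 1)
    simp only [mul_one, mul_neg, neg_neg] at this
    exact this
  have hmul := (((h1.mul_const (2:ℂ)).mul h3).mul h4).mul h5
  have hfun : EE = fun z : ℂ => (2:ℂ) ^ ((1:ℂ) - z) * 2 * (2 * (Real.pi:ℂ)) ^ (z - 1)
      * Complex.Gamma (1 + z) * Complex.Gamma (1 - z) := rfl
  rw [hfun]
  refine hmul.congr_deriv ?_
  simp only [Pi.mul_apply, sub_zero, add_zero, zero_sub, cpow_one, cpow_neg_one, Complex.Gamma_one, mul_inv]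
  ring

/-! ### real sinc limits -/

lemma abs_sin_sub_le {σ : ℝ} (h0 : 0 < σ) (h1 : σ < 1/2) :
    |Real.sin (Real.pi*σ/2) - Real.pi/2*σ| ≤ σ^3 := by
  set x := Real.pi*σ/2 with hx
  have hx0 : 0 < x := by
    have := Real.pi_pos
    positivity
  have hx1 : x ≤ 1 := by
    have hπ : Real.pi < 3.15 := by
      have := Real.pi_lt_d2
      linarith
    rw [hx]
    nlinarith
  have hu : Real.sin x < x := Real.sin_lt hx0
  have hl : x - x^3/4 < Real.sin x := by
    have := Real.sin_gt_sub_cube hx0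
    nlinarith [pow_pos hx0 3]
  have hπ2 : Real.pi < 3.15 := by linarith [Real.pi_lt_d2]
  have hx2 : x ≤ 1.575 * σ := by rw [hx]; nlinarith
  have hcube : x^3 ≤ (1.575*σ)^3 := pow_le_pow_left₀ hx0.le hx2 3
  have hx3 : x^3/4 ≤ σ^3 := by nlinarith [pow_pos h0 3]
  have hxe : Real.pi/2*σ = x := by rw [hx]; ring
  rw [abs_le]
  constructor
  · nlinarith
  · nlinarith

lemma tendsto_sin_err :
    Tendsto (fun σ : ℝ => (Real.sin (Real.pi*σ/2) - Real.pi/2*σ)/σ^2) (𝓝[>] (0:ℝ)) (𝓝 0) := by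
  rw [tendsto_zero_iff_norm_tendsto_zero]
  apply squeeze_zero' (g := fun σ : ℝ => σ)
  · exact Eventually.of_forall (fun σ => norm_nonneg _)
  · filter_upwards [Ioo_mem_nhdsGT_of_mem (by norm_num : (0:ℝ) ∈ Ico (0:ℝ) (1/2))]
      with σ hσ
    have h := abs_sin_sub_le hσ.1 hσ.2
    rw [Real.norm_eq_abs, abs_div, _root_.abs_of_nonneg (sq_nonneg σ)]
    rw [div_le_iff₀ (by nlinarith [hσ.1] : (0:ℝ) < σ^2)]
    calc |Real.sin (Real.pi*σ/2) - Real.pi/2*σ| ≤ σ^3 := h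
      _ = σ * σ^2 := by ring
  · exact (continuous_id.tendsto (0:ℝ)).mono_left nhdsWithin_le_nhds

lemma tendsto_sin_div :
    Tendsto (fun σ : ℝ => Real.sin (Real.pi*σ/2)/σ) (𝓝[>] (0:ℝ)) (𝓝 (Real.pi/2)) := by
  rw [← tendsto_sub_nhds_zero_iff]
  rw [tendsto_zero_iff_norm_tendsto_zero]
  apply squeeze_zero' (g := fun σ : ℝ => σ^2)
  · exact Eventually.of_forall (fun σ => norm_nonneg _)
  · filter_upwards [Ioo_mem_nhdsGT_of_mem (by norm_num : (0:ℝ) ∈ Ico (0:ℝ) (1/2))]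
      with σ hσ
    have h := abs_sin_sub_le hσ.1 hσ.2
    have hσ0 := hσ.1
    have heq : Real.sin (Real.pi*σ/2)/σ - Real.pi/2
        = (Real.sin (Real.pi*σ/2) - Real.pi/2*σ)/σ := by
      field_simp
    rw [heq, Real.norm_eq_abs, abs_div, _root_.abs_of_nonneg hσ0.le, div_le_iff₀ hσ0]
    calc |Real.sin (Real.pi*σ/2) - Real.pi/2*σ| ≤ σ^3 := h
      _ = σ^2 * σ := by ring
  · have : Tendsto (fun σ : ℝ => σ^2) (𝓝 (0:ℝ)) (𝓝 (0^2)) :=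
      (continuous_pow 2).tendsto 0
    simpa using this.mono_left nhdsWithin_le_nhds

/-! ### complex limit lemmas -/

lemma tendsto_aux_coe : Tendsto (fun σ : ℝ => ((σ:ℝ):ℂ)) (𝓝[>] (0:ℝ)) (𝓝 0) := by
  have := (Complex.continuous_ofReal.tendsto (0:ℝ)).mono_left
    (nhdsWithin_le_nhds : 𝓝[>] (0:ℝ) ≤ 𝓝 0)
  simpa using this

lemma tendsto_coe_ne : Tendsto (fun σ : ℝ => ((σ:ℝ):ℂ)) (𝓝[>] (0:ℝ)) (𝓝[≠] (0:ℂ)) := by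
  apply tendsto_nhdsWithin_of_tendsto_nhds_of_eventually_within _ tendsto_aux_coe
  filter_upwards [self_mem_nhdsWithin] with σ (hσ : 0 < σ)
  simp only [mem_compl_singleton_iff, ne_eq, ofReal_eq_zero]
  exact hσ.ne'

lemma tendsto_EE : Tendsto (fun σ : ℝ => EE ((σ:ℝ):ℂ)) (𝓝[>] (0:ℝ)) (𝓝 (EE 0)) :=
  (hasDerivAt_EE.differentiableAt.continuousAt.tendsto).comp tendsto_aux_coe

lemma tendsto_sinc_c :
    Tendsto (fun σ : ℝ => Complex.sin ((Real.pi:ℂ)*((σ:ℝ):ℂ)/2)/((σ:ℝ):ℂ))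
      (𝓝[>] (0:ℝ)) (𝓝 ((Real.pi:ℂ)/2)) := by
  have h2 := (Complex.continuous_ofReal.tendsto (Real.pi/2)).comp tendsto_sin_div
  rw [show ((Real.pi/2 : ℝ):ℂ) = (Real.pi:ℂ)/2 by push_cast; ring] at h2
  refine h2.congr (fun σ => ?_)
  simp only [Function.comp]
  push_cast
  ring

lemma tendsto_err_c :
    Tendsto (fun σ : ℝ =>
        (Complex.sin ((Real.pi:ℂ)*((σ:ℝ):ℂ)/2) - ((Real.pi:ℂ)/2)*((σ:ℝ):ℂ))/((σ:ℝ):ℂ)^2)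
      (𝓝[>] (0:ℝ)) (𝓝 0) := by
  have h2 := (Complex.continuous_ofReal.tendsto 0).comp tendsto_sin_err
  rw [show ((0 : ℝ):ℂ) = 0 by norm_num] at h2
  refine h2.congr (fun σ => ?_)
  simp only [Function.comp]
  push_cast
  ring

lemma tendsto_zeta_c :
    Tendsto (fun σ : ℝ => riemannZeta (1 - ((σ:ℝ):ℂ)) + 1/((σ:ℝ):ℂ))
      (𝓝[>] (0:ℝ)) (𝓝 ((Real.eulerMascheroniConstant : ℝ):ℂ)) := by
  have hmap : Tendsto (fun σ : ℝ => (1:ℂ) - ((σ:ℝ):ℂ)) (𝓝[>] (0:ℝ)) (𝓝[≠] (1:ℂ)) := by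
    apply tendsto_nhdsWithin_of_tendsto_nhds_of_eventually_within
    · have := (show Continuous fun σ:ℝ => (1:ℂ) - ((σ:ℝ):ℂ) from
        continuous_const.sub Complex.continuous_ofReal).tendsto (0:ℝ)
      simp only [ofReal_zero, sub_zero] at this
      exact this.mono_left nhdsWithin_le_nhds
    · filter_upwards [self_mem_nhdsWithin] with σ (hσ : 0 < σ)
      simp only [mem_compl_singleton_iff]
      intro h
      have : ((σ:ℝ):ℂ) = 0 := by linear_combination -h
      rw [ofReal_eq_zero] at this
      exact hσ.ne' this
  have h := tendsto_riemannZeta_sub_one_div.comp hmap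
  refine h.congr (fun σ => ?_)
  simp only [Function.comp]
  rw [show (1:ℂ) - ((σ:ℝ):ℂ) - 1 = -((σ:ℝ):ℂ) from by ring, one_div, inv_neg, ← one_div,
    sub_neg_eq_add]

lemma log_two_c : ((Real.log 2 : ℝ):ℂ) = Complex.log 2 := by
  rw [Complex.ofReal_log (by norm_num : (0:ℝ) ≤ 2)]
  norm_num

lemma log_two_pi_c : Complex.log (2 * (Real.pi:ℂ))
    = Complex.log 2 + ((Real.log Real.pi : ℝ):ℂ) := by
  rw [show (2*(Real.pi:ℂ)) = (((2*Real.pi):ℝ):ℂ) from by push_cast; ring,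
    ← Complex.ofReal_log (by positivity : (0:ℝ) ≤ 2*Real.pi),
    Real.log_mul (by norm_num) Real.pi_ne_zero]
  push_cast
  rw [log_two_c]

lemma tendsto_T2 :
    Tendsto (fun σ : ℝ => (1 - EE ((σ:ℝ):ℂ) * ((Real.pi:ℂ)/2))/((σ:ℝ):ℂ))
      (𝓝[>] (0:ℝ)) (𝓝 (-((Real.log Real.pi : ℝ):ℂ))) := by
  have hπ : (Real.pi:ℂ) ≠ 0 := by exact_mod_cast Real.pi_ne_zero
  have hsl := (hasDerivAt_iff_tendsto_slope.mp hasDerivAt_EE).comp tendsto_coe_ne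
  have h2 := hsl.const_mul (-(Real.pi:ℂ)/2)
  have hval : (-(Real.pi:ℂ)/2) * ((2:ℂ)/(Real.pi:ℂ)
      * (Complex.log (2*(Real.pi:ℂ)) - Complex.log 2)) = -((Real.log Real.pi : ℝ):ℂ) := by
    rw [log_two_pi_c]
    field_simp
    ring
  rw [hval] at h2
  refine h2.congr' ?_
  filter_upwards [self_mem_nhdsWithin] with σ (hσ : 0 < σ)
  have hσc : ((σ:ℝ):ℂ) ≠ 0 := ofReal_ne_zero.mpr hσ.ne'
  simp only [Function.comp, slope_def_field, EE_zero]
  rw [sub_zero]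
  field_simp
  ring

/-! ### functional equation decomposition -/

lemma decomp_algebra (E S Z x : ℂ) (hx : x ≠ 0) (p c : ℂ) :
    E * (S/x) * (Z + 1/x) + (1 - E*(p/2))/x - E*((S - p/2*x)/x^2) + c
      = E*S*Z/x + 1/x + c := by
  field_simp
  ring

lemma RHS_decomp {σ : ℝ} (h0 : 0 < σ) (h1 : σ < 1) :
    (2:ℂ) ^ ((1:ℂ) - ((σ:ℝ):ℂ)) * (Complex.Gamma ((σ:ℝ):ℂ) * riemannZeta ((σ:ℝ):ℂ))
        + 1/((σ:ℝ):ℂ) + 1/(1-((σ:ℝ):ℂ))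
    = EE ((σ:ℝ):ℂ) * (Complex.sin ((Real.pi:ℂ)*((σ:ℝ):ℂ)/2)/((σ:ℝ):ℂ))
        * (riemannZeta (1-((σ:ℝ):ℂ)) + 1/((σ:ℝ):ℂ))
      + (1 - EE ((σ:ℝ):ℂ) * ((Real.pi:ℂ)/2))/((σ:ℝ):ℂ)
      - EE ((σ:ℝ):ℂ)
        * ((Complex.sin ((Real.pi:ℂ)*((σ:ℝ):ℂ)/2) - ((Real.pi:ℂ)/2)*((σ:ℝ):ℂ))/((σ:ℝ):ℂ)^2)
      + 1/(1-((σ:ℝ):ℂ)) := by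
  have hσ0 : ((σ:ℝ):ℂ) ≠ 0 := ofReal_ne_zero.mpr h0.ne'
  have hσ1 : (1:ℂ) - ((σ:ℝ):ℂ) ≠ 0 := by
    intro h
    have := congrArg Complex.re h
    simp only [Complex.sub_re, Complex.one_re, Complex.ofReal_re, Complex.zero_re] at this
    linarith
  have hne : ∀ n : ℕ, (1:ℂ) - ((σ:ℝ):ℂ) ≠ -(n:ℂ) := by
    intro n h
    have := congrArg Complex.re h
    simp only [Complex.sub_re, Complex.one_re, Complex.ofReal_re, Complex.neg_re,
      Complex.natCast_re] at this
    have h2 : (0:ℝ) ≤ (n:ℝ) := Nat.cast_nonneg n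
    linarith
  have hs'1 : (1:ℂ) - ((σ:ℝ):ℂ) ≠ 1 := by
    intro h
    have := congrArg Complex.re h
    simp only [Complex.sub_re, Complex.one_re, Complex.ofReal_re] at this
    linarith
  have hζ := riemannZeta_one_sub (s := 1 - ((σ:ℝ):ℂ)) hne hs'1
  rw [show (1:ℂ) - (1 - ((σ:ℝ):ℂ)) = ((σ:ℝ):ℂ) from by ring] at hζ
  rw [show -(1 - ((σ:ℝ):ℂ)) = ((σ:ℝ):ℂ) - 1 from by ring] at hζ
  rw [show (Real.pi:ℂ) * (1 - ((σ:ℝ):ℂ)) / 2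
    = (Real.pi:ℂ)/2 - (Real.pi:ℂ)*((σ:ℝ):ℂ)/2 from by ring, Complex.cos_pi_div_two_sub] at hζ
  have hΓ : Complex.Gamma ((σ:ℝ):ℂ) = Complex.Gamma (1+((σ:ℝ):ℂ))/((σ:ℝ):ℂ) := by
    have h := Complex.Gamma_add_one ((σ:ℝ):ℂ) hσ0
    rw [show ((σ:ℝ):ℂ)+1 = 1+((σ:ℝ):ℂ) from by ring] at h
    rw [h, mul_div_cancel_left₀ _ hσ0]
  rw [hζ, hΓ]
  rw [decomp_algebra (EE ((σ:ℝ):ℂ)) (Complex.sin ((Real.pi:ℂ)*((σ:ℝ):ℂ)/2))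
    (riemannZeta (1-((σ:ℝ):ℂ))) ((σ:ℝ):ℂ) hσ0 ((Real.pi:ℂ)) (1/(1-((σ:ℝ):ℂ)))]
  simp only [EE]
  field_simp

/-! ### the limit -/

lemma tendsto_RHS :
    Tendsto (fun σ : ℝ => (2:ℂ) ^ ((1:ℂ) - ((σ:ℝ):ℂ))
        * (Complex.Gamma ((σ:ℝ):ℂ) * riemannZeta ((σ:ℝ):ℂ))
        + 1/((σ:ℝ):ℂ) + 1/(1-((σ:ℝ):ℂ)))
      (𝓝[>] (0:ℝ))
      (𝓝 (((1 - Real.log Real.pi + Real.eulerMascheroniConstant : ℝ)):ℂ)) := by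
  have hπ : (Real.pi:ℂ) ≠ 0 := by exact_mod_cast Real.pi_ne_zero
  have hT1 := (tendsto_EE.mul tendsto_sinc_c).mul tendsto_zeta_c
  have hT3 := tendsto_EE.mul tendsto_err_c
  have hT4 : Tendsto (fun σ : ℝ => 1/(1-((σ:ℝ):ℂ))) (𝓝[>] (0:ℝ)) (𝓝 (1/((1:ℂ)-0))) := by
    apply Tendsto.div tendsto_const_nhds
    · have := ((show Continuous fun σ:ℝ => (1:ℂ) - ((σ:ℝ):ℂ) from
        continuous_const.sub Complex.continuous_ofReal).tendsto (0:ℝ)).mono_left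
        (nhdsWithin_le_nhds : 𝓝[>] (0:ℝ) ≤ 𝓝 0)
      simpa using this
    · norm_num
  have hsum := ((hT1.add tendsto_T2).sub hT3).add hT4
  have hval : EE 0 * ((Real.pi:ℂ)/2) * ((Real.eulerMascheroniConstant : ℝ):ℂ)
      + (-((Real.log Real.pi : ℝ):ℂ)) - EE 0 * 0 + 1/((1:ℂ)-0)
      = (((1 - Real.log Real.pi + Real.eulerMascheroniConstant : ℝ)):ℂ) := by
    rw [EE_zero]
    push_cast
    field_simp
    ring
  rw [hval] at hsum
  refine hsum.congr' ?_
  filter_upwards [Ioo_mem_nhdsGT_of_mem (by norm_num : (0:ℝ) ∈ Ico (0:ℝ) 1)] with σ hσ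
  exact (RHS_decomp hσ.1 hσ.2).symm



lemma M_zero : mellin FF0 0 + mellin FF1 0
    = (((1 - Real.log Real.pi + Real.eulerMascheroniConstant : ℝ)):ℂ) := by
  have hcont : ContinuousAt (fun s : ℂ => mellin FF0 s + mellin FF1 s) 0 :=
    ((diff_mellin_FF0 (by norm_num : (-1:ℝ) < (0:ℂ).re)).continuousAt).add
      ((diff_mellin_FF1 0).continuousAt)
  have h1 : Tendsto (fun σ : ℝ => mellin FF0 ((σ:ℝ):ℂ) + mellin FF1 ((σ:ℝ):ℂ)) (𝓝[>] (0:ℝ))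
      (𝓝 (mellin FF0 0 + mellin FF1 0)) := hcont.tendsto.comp tendsto_aux_coe
  have h2 : Tendsto (fun σ : ℝ => mellin FF0 ((σ:ℝ):ℂ) + mellin FF1 ((σ:ℝ):ℂ)) (𝓝[>] (0:ℝ))
      (𝓝 (((1 - Real.log Real.pi + Real.eulerMascheroniConstant : ℝ)):ℂ)) := by
    refine tendsto_RHS.congr' ?_
    filter_upwards [Ioo_mem_nhdsGT_of_mem (by norm_num : (0:ℝ) ∈ Ico (0:ℝ) 1)] with σ hσ
    refine (key_strip ?_ ?_).symm
    · simpa using hσ.1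
    · simpa using hσ.2
  exact tendsto_nhds_unique h1 h2

lemma coth_eq {t : ℝ} (ht : 0 < t) :
    ((1 + Real.exp (-2*t)) / (1 - Real.exp (-2*t)) - 1/t) * (1/t)
      = (2 * vR (2*t) + 1) * (1/t) := by
  have hE : 0 < Real.exp (2*t) - 1 := exp_sub_one_pos (by linarith)
  have hEpos := Real.exp_pos (2*t)
  have he : Real.exp (-2*t) = (Real.exp (2*t))⁻¹ := by
    rw [← Real.exp_neg]; ring_nf
  have h1 : 1 - Real.exp (-2*t) ≠ 0 := by
    rw [he]
    have h2 : (Real.exp (2*t))⁻¹ < 1 := by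
      rw [inv_lt_one_iff₀]
      right; linarith
    linarith
  rw [vR, he]
  rw [he] at h1
  field_simp
  ring

lemma tail_eq {t : ℝ} (ht : 0 < t) :
    (2 * Real.exp (-2*t) / (1 - Real.exp (-2*t))) * (1/t)
      = (2 * (1/(Real.exp (2*t) - 1))) * (1/t) := by
  have hE : 0 < Real.exp (2*t) - 1 := exp_sub_one_pos (by linarith)
  have hEpos := Real.exp_pos (2*t)
  have he : Real.exp (-2*t) = (Real.exp (2*t))⁻¹ := by
    rw [← Real.exp_neg]; ring_nf
  have h1 : 1 - (Real.exp (2*t))⁻¹ ≠ 0 := by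
    have h2 : (Real.exp (2*t))⁻¹ < 1 := by
      rw [inv_lt_one_iff₀]; right; linarith
    linarith
  rw [he]
  field_simp

lemma mellin_FF0_zero :
    mellin FF0 0 = ((∫ t in Ioo (0:ℝ) 1,
      ((1 + Real.exp (-2*t)) / (1 - Real.exp (-2*t)) - 1/t) * (1/t) : ℝ) : ℂ) := by
  have heqind : (fun t : ℝ => ((t:ℝ):ℂ) ^ ((0:ℂ)-1) • FF0 t)
      = (Ioc (0:ℝ) 1).indicator
          (fun t => ((t:ℝ):ℂ) ^ ((0:ℂ)-1) • (2 * w (2*t) + 1)) := by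
    funext t
    rw [FF0]
    by_cases h : t ∈ Ioc (0:ℝ) 1
    · rw [indicator_of_mem h, indicator_of_mem h]
    · rw [indicator_of_notMem h, indicator_of_notMem h, smul_zero]
  have hpt : EqOn (fun t : ℝ => ((t:ℝ):ℂ) ^ ((0:ℂ)-1) • (2 * w (2*t) + 1))
      (fun t : ℝ => ((((1 + Real.exp (-2*t)) / (1 - Real.exp (-2*t)) - 1/t) * (1/t) : ℝ) : ℂ))
      (Ioc 0 1) := by
    intro t htm
    have ht0 : 0 < t := htm.1
    have htc : ((t:ℝ):ℂ) ≠ 0 := ofReal_ne_zero.mpr ht0.ne'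
    simp only
    rw [zero_sub, cpow_neg_one, smul_eq_mul, w]
    rw [coth_eq ht0]
    push_cast
    field_simp
  rw [show mellin FF0 0 = ∫ t in Ioi (0:ℝ), ((t:ℝ):ℂ) ^ ((0:ℂ)-1) • FF0 t from rfl, heqind,
    setIntegral_indicator measurableSet_Ioc,
    show Ioi (0:ℝ) ∩ Ioc 0 1 = Ioc 0 1 from inter_eq_self_of_subset_right Ioc_subset_Ioi_self,
    setIntegral_congr_fun measurableSet_Ioc hpt, integral_Ioc_eq_integral_Ioo]
  exact integral_ofReal

lemma mellin_FF1_zero :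
    mellin FF1 0 = ((∫ t in Ioi (1:ℝ),
      (2 * Real.exp (-2*t) / (1 - Real.exp (-2*t))) * (1/t) : ℝ) : ℂ) := by
  have heqind : (fun t : ℝ => ((t:ℝ):ℂ) ^ ((0:ℂ)-1) • FF1 t)
      = (Ioi (1:ℝ)).indicator
          (fun t => ((t:ℝ):ℂ) ^ ((0:ℂ)-1) • (2 * w (2*t) + ((t:ℂ))⁻¹)) := by
    funext t
    rw [FF1]
    by_cases h : t ∈ Ioi (1:ℝ)
    · rw [indicator_of_mem h, indicator_of_mem h]
    · rw [indicator_of_notMem h, indicator_of_notMem h, smul_zero]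
  have hpt : EqOn (fun t : ℝ => ((t:ℝ):ℂ) ^ ((0:ℂ)-1) • (2 * w (2*t) + ((t:ℂ))⁻¹))
      (fun t : ℝ => (((2 * Real.exp (-2*t) / (1 - Real.exp (-2*t))) * (1/t) : ℝ) : ℂ))
      (Ioi 1) := by
    intro t htm
    have ht0 : 0 < t := lt_trans zero_lt_one htm
    have htc : ((t:ℝ):ℂ) ≠ 0 := ofReal_ne_zero.mpr ht0.ne'
    simp only
    rw [zero_sub, cpow_neg_one, smul_eq_mul, w2_add_inv_eq ht0.ne', bose]
    rw [tail_eq ht0]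
    push_cast
    field_simp
  rw [show mellin FF1 0 = ∫ t in Ioi (0:ℝ), ((t:ℝ):ℂ) ^ ((0:ℂ)-1) • FF1 t from rfl, heqind,
    setIntegral_indicator measurableSet_Ioi,
    show Ioi (0:ℝ) ∩ Ioi 1 = Ioi 1 from by rw [Ioi_inter_Ioi]; norm_num,
    setIntegral_congr_fun measurableSet_Ioi hpt]
  exact integral_ofReal


end BZ

open MeasureTheory Real

/-- Equation (3.42) of the paper: the sum of the two convergent improper integrals
`∫₀¹ ((1 + e^{-2t})/(1 - e^{-2t}) − 1/t) · (1/t) dt` and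
`∫₁^∞ (2e^{-2t}/(1 - e^{-2t})) · (1/t) dt` equals `1 − log π + γ`,
where `γ` is the Euler–Mascheroni constant. -/
theorem integral_coth_sub_inv_add_integral_tail_eq :
    (∫ t in Set.Ioo (0 : ℝ) 1,
        ((1 + Real.exp (-2 * t)) / (1 - Real.exp (-2 * t)) - 1 / t) * (1 / t))
      + (∫ t in Set.Ioi (1 : ℝ),
        (2 * Real.exp (-2 * t) / (1 - Real.exp (-2 * t))) * (1 / t))
      = 1 - Real.log Real.pi + Real.eulerMascheroniConstant := by
  have h := BZ.M_zero
  rw [BZ.mellin_FF0_zero, BZ.mellin_FF1_zero, ← Complex.ofReal_add] at h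
  exact_mod_cast h
end

section
/- Let H be a complex Hilbert space, E a closed subspace of H with orthogonal projection p onto E, and set q = id − p. Let D : H → H be a (not necessarily continuous) complex-linear map, and let T > 0 and C > 0 be real constants. Assume: (i) p(D(p s)) = 0 for all s ∈ H; (ii) ‖p(D(q s))‖ ≤ ‖q s‖/T and ‖q(D(p s))‖ ≤ ‖p s‖/T for all s ∈ H; (iii) ‖q(D(q s))‖ ≥ C·√T·‖q s‖ for all s ∈ H. Then for every λ ∈ ℂ and every s ∈ H, ‖λ·s − D s‖ ≥ (1/2)·( (|λ| − 1/T)·‖p s‖ + (C·√T − |λ| − 1/T)·‖q s‖ ). -/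
open Complex

/-- The abstract resolvent lower bound (4.29) of the paper: if `p` is the orthogonal
projection onto a closed subspace `E` of a complex Hilbert space `H`, `q = id − p`, and
`D : H → H` is a complex-linear map such that `p D p = 0`, `‖p D q s‖ ≤ ‖q s‖/T`,
`‖q D p s‖ ≤ ‖p s‖/T` and `‖q D q s‖ ≥ C √T ‖q s‖`, then for every `λ ∈ ℂ` and `s ∈ H`,
`‖λ s − D s‖ ≥ ½((|λ| − 1/T)‖p s‖ + (C √T − |λ| − 1/T)‖q s‖)`. -/
theorem resolvent_lower_bound
    {H : Type*} [NormedAddCommGroup H] [InnerProductSpace ℂ H] [CompleteSpace H]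
    (E : Submodule ℂ H) (hE : IsClosed (E : Set H))
    (p : H → H) (hp : ∀ x, haveI : CompleteSpace E := hE.completeSpace_coe
      p x = (E.orthogonalProjectionOnto x : H))
    (D : H →ₗ[ℂ] H) (T C : ℝ) (hT : 0 < T) (hC : 0 < C)
    (h1 : ∀ s, p (D (p s)) = 0)
    (h2 : ∀ s, ‖p (D (s - p s))‖ ≤ ‖s - p s‖ / T)
    (h3 : ∀ s, ‖D (p s) - p (D (p s))‖ ≤ ‖p s‖ / T)
    (h4 : ∀ s, ‖D (s - p s) - p (D (s - p s))‖ ≥ C * Real.sqrt T * ‖s - p s‖) :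
    ∀ (lam : ℂ) (s : H),
      ‖lam • s - D s‖ ≥
        (1 / 2) * ((‖lam‖ - 1 / T) * ‖p s‖
          + (C * Real.sqrt T - ‖lam‖ - 1 / T) * ‖s - p s‖) := by
  haveI : CompleteSpace E := hE.completeSpace_coe
  intro lam s
  -- linearity of p
  have p_add : ∀ x y : H, p (x + y) = p x + p y := by
    intro x y; simp only [hp, map_add]; rfl
  have p_smul : ∀ (c : ℂ) (x : H), p (c • x) = c • p x := by
    intro c x; simp only [hp, map_smul]; rfl
  have p_sub : ∀ x y : H, p (x - y) = p x - p y := by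
    intro x y; simp only [hp, map_sub]; rfl
  -- norm bounds: ‖p x‖ ≤ ‖x‖ and ‖x - p x‖ ≤ ‖x‖
  have p_norm : ∀ x : H, ‖p x‖ ≤ ‖x‖ := by
    intro x
    rw [hp x]
    have := (E.orthogonalProjectionOnto).le_of_opNorm_le (Submodule.orthogonalProjectionOnto_norm_le E) x
    simpa using this
  have q_norm : ∀ x : H, ‖x - p x‖ ≤ ‖x‖ := by
    intro x
    rw [hp x]
    have h := (Eᗮ.orthogonalProjectionOnto).le_of_opNorm_le (Submodule.orthogonalProjectionOnto_norm_le Eᗮ) x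
    have h' : ‖((Eᗮ.orthogonalProjectionOnto) x : H)‖ ≤ ‖x‖ := by simpa using h
    rwa [Submodule.orthogonalProjectionOnto_orthogonal] at h'
  set u : H := lam • s - D s with hu
  -- decomposition of D s
  have hDs : D s = D (p s) + D (s - p s) := by
    rw [← map_add]; congr 1; abel
  -- p u
  have hpu : p u = lam • p s - p (D (s - p s)) := by
    rw [hu, p_sub, p_smul, hDs, p_add, h1 s, zero_add]
  have bound1 : ‖lam‖ * ‖p s‖ - ‖s - p s‖ / T ≤ ‖p u‖ := by
    have := norm_sub_norm_le (lam • p s) (p (D (s - p s)))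
    rw [← hpu] at this
    have h2' := h2 s
    have : ‖lam • p s‖ - ‖p (D (s - p s))‖ ≤ ‖p u‖ := this
    rw [norm_smul] at this
    linarith
  -- q u
  have hqu : u - p u = lam • (s - p s) - ((D (p s) - p (D (p s))) + (D (s - p s) - p (D (s - p s)))) := by
    rw [hpu, hu, hDs, h1 s]
    module
  have bound2 : C * Real.sqrt T * ‖s - p s‖ - ‖lam‖ * ‖s - p s‖ - ‖p s‖ / T
      ≤ ‖u - p u‖ := by
    have htri : ‖(D (p s) - p (D (p s))) + (D (s - p s) - p (D (s - p s)))‖ - ‖lam • (s - p s)‖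
        ≤ ‖u - p u‖ := by
      rw [hqu]
      have := norm_sub_norm_le ((D (p s) - p (D (p s))) + (D (s - p s) - p (D (s - p s))))
        (lam • (s - p s))
      calc ‖(D (p s) - p (D (p s))) + (D (s - p s) - p (D (s - p s)))‖ - ‖lam • (s - p s)‖
          ≤ ‖((D (p s) - p (D (p s))) + (D (s - p s) - p (D (s - p s)))) - lam • (s - p s)‖ :=
            this
        _ = ‖lam • (s - p s) - ((D (p s) - p (D (p s))) + (D (s - p s) - p (D (s - p s))))‖ := by
            rw [norm_sub_rev]
    have htri2 : ‖D (s - p s) - p (D (s - p s))‖ - ‖D (p s) - p (D (p s))‖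
        ≤ ‖(D (p s) - p (D (p s))) + (D (s - p s) - p (D (s - p s)))‖ := by
      have := norm_sub_norm_le (D (s - p s) - p (D (s - p s))) (-(D (p s) - p (D (p s))))
      simp only [norm_neg] at this
      calc ‖D (s - p s) - p (D (s - p s))‖ - ‖D (p s) - p (D (p s))‖
          ≤ ‖(D (s - p s) - p (D (s - p s))) - (-(D (p s) - p (D (p s))))‖ := this
        _ = ‖(D (p s) - p (D (p s))) + (D (s - p s) - p (D (s - p s)))‖ := by
            rw [sub_neg_eq_add, add_comm]
    have h3' := h3 s
    have h4' := h4 s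
    have hn : ‖lam • (s - p s)‖ = ‖lam‖ * ‖s - p s‖ := by
      rw [norm_smul]
    linarith
  have hle1 : ‖p u‖ ≤ ‖u‖ := p_norm u
  have hle2 : ‖u - p u‖ ≤ ‖u‖ := q_norm u
  have habs : ‖lam‖ = ‖lam‖ := rfl
  have key : (‖lam‖ - 1 / T) * ‖p s‖
      + (C * Real.sqrt T - ‖lam‖ - 1 / T) * ‖s - p s‖ ≤ 2 * ‖u‖ := by
    have e1 : (‖lam‖ - 1 / T) * ‖p s‖
        = ‖lam‖ * ‖p s‖ - ‖p s‖ / T := by ring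
    have e2 : (C * Real.sqrt T - ‖lam‖ - 1 / T) * ‖s - p s‖
        = C * Real.sqrt T * ‖s - p s‖ - ‖lam‖ * ‖s - p s‖ - ‖s - p s‖ / T := by ring
    rw [e1, e2]; linarith
  linarith
end

section
/- Let H be a complex Hilbert space, E a closed subspace of H with orthogonal projection p onto E, and set q = id − p. Let D : H → H be a complex-linear map, and let T > 0, C > 0 be real constants satisfying hypotheses: (i) p(D(p s)) = 0 for all s; (ii) ‖p(D(q s))‖ ≤ ‖q s‖/T and ‖q(D(p s))‖ ≤ ‖p s‖/T for all s; (iii) ‖q(D(q s))‖ ≥ C·√T·‖q s‖ for all s. Suppose λ ∈ ℂ and δ > 0 are such that |λ| − 1/T ≥ 2δ and C·√T − |λ| − 1/T ≥ 2δ. Then for every s ∈ H, ‖λ²·s − D(D s)‖ ≥ δ²·‖s‖; in particular λ² is not an eigenvalue of D². -/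
open Complex

/-- The abstract content of Proposition 4.2 of the paper (inequality (4.30)): under the
hypotheses of the resolvent lower bound, if `|λ| − 1/T ≥ 2δ` and `C√T − |λ| − 1/T ≥ 2δ`
for some `δ > 0`, then `‖λ² s − D² s‖ ≥ δ² ‖s‖` for all `s`; in particular `λ²` is not an
eigenvalue of `D²`. -/
theorem sq_resolvent_lower_bound
    {H : Type*} [NormedAddCommGroup H] [InnerProductSpace ℂ H] [CompleteSpace H]
    (E : Submodule ℂ H) (hE : IsClosed (E : Set H))
    (p : H → H) (hp : ∀ x, haveI : CompleteSpace E := hE.completeSpace_coe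
      p x = (E.orthogonalProjection x : H))
    (D : H →ₗ[ℂ] H) (T C : ℝ) (hT : 0 < T) (hC : 0 < C)
    (h1 : ∀ s, p (D (p s)) = 0)
    (h2 : ∀ s, ‖p (D (s - p s))‖ ≤ ‖s - p s‖ / T)
    (h3 : ∀ s, ‖D (p s) - p (D (p s))‖ ≤ ‖p s‖ / T)
    (h4 : ∀ s, ‖D (s - p s) - p (D (s - p s))‖ ≥ C * Real.sqrt T * ‖s - p s‖)
    (lam : ℂ) (δ : ℝ) (hδ : 0 < δ)
    (hlam1 : ‖lam‖ - 1 / T ≥ 2 * δ)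
    (hlam2 : C * Real.sqrt T - ‖lam‖ - 1 / T ≥ 2 * δ) :
    (∀ s : H, ‖lam ^ 2 • s - D (D s)‖ ≥ δ ^ 2 * ‖s‖) ∧
      ¬ Module.End.HasEigenvalue (D ∘ₗ D) (lam ^ 2) := by
  haveI : CompleteSpace E := hE.completeSpace_coe
  -- basic facts about p
  have hpadd : ∀ x y : H, p (x + y) = p x + p y := by
    intro x y; rw [hp, hp, hp, map_add]; rfl
  have hpsub : ∀ x y : H, p (x - y) = p x - p y := by
    intro x y; rw [hp, hp, hp, map_sub]; rfl
  have hpsmul : ∀ (a : ℂ) (x : H), p (a • x) = a • p x := by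
    intro a x; rw [hp, hp, map_smul]; rfl
  have hpyth : ∀ x : H, ‖x‖ ^ 2 = ‖p x‖ ^ 2 + ‖x - p x‖ ^ 2 := by
    intro x
    have h0 : inner ℂ (x - (E.orthogonalProjection x : H)) ((E.orthogonalProjection x : H)) = (0:ℂ) :=
      E.starProjection_inner_eq_zero x _ (E.orthogonalProjection x).2
    have := norm_add_sq_eq_norm_sq_add_norm_sq_of_inner_eq_zero _ _ h0
    rw [sub_add_cancel] at this
    rw [hp]; nlinarith [this]
  have hple : ∀ x : H, ‖p x‖ ≤ ‖x‖ := by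
    intro x
    have := hpyth x
    nlinarith [norm_nonneg (p x), norm_nonneg x, sq_nonneg ‖x - p x‖]
  have hqle : ∀ x : H, ‖x - p x‖ ≤ ‖x‖ := by
    intro x
    have := hpyth x
    nlinarith [norm_nonneg (x - p x), norm_nonneg x, sq_nonneg ‖p x‖]
  have htri : ∀ x : H, ‖x‖ ≤ ‖p x‖ + ‖x - p x‖ := by
    intro x
    calc ‖x‖ = ‖p x + (x - p x)‖ := by rw [add_sub_cancel]
    _ ≤ ‖p x‖ + ‖x - p x‖ := norm_add_le _ _
  -- key resolvent bound
  have key : ∀ μ : ℂ, ‖μ‖ = ‖lam‖ →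
      ∀ s : H, ‖μ • s - D s‖ ≥ δ * ‖s‖ := by
    intro μ hμ s
    set a := ‖p s‖ with ha
    set b := ‖s - p s‖ with hb
    have ha0 : 0 ≤ a := norm_nonneg _
    have hb0 : 0 ≤ b := norm_nonneg _
    have hDs : D s = D (p s) + D (s - p s) := by rw [← map_add, add_sub_cancel]
    -- bound 1 : via p-component
    have hp1 : p (μ • s - D s) = μ • p s - p (D (s - p s)) := by
      rw [hpsub, hpsmul, hDs, hpadd, h1, zero_add]
    have b1 : ‖μ‖ * a - b / T ≤ ‖μ • s - D s‖ := by
      have : ‖μ‖ * a - b / T ≤ ‖p (μ • s - D s)‖ := by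
        rw [hp1]
        calc ‖μ‖ * a - b / T
            ≤ ‖μ • p s‖ - ‖p (D (s - p s))‖ := by
              rw [norm_smul]
              have := h2 s
              linarith
          _ ≤ ‖μ • p s - p (D (s - p s))‖ := norm_sub_norm_le _ _
      exact this.trans (hple _)
    -- bound 2 : via q-component
    have hq1 : (μ • s - D s) - p (μ • s - D s)
        = μ • (s - p s) - ((D (p s) - p (D (p s))) + (D (s - p s) - p (D (s - p s)))) := by
      rw [hp1, hDs, h1]
      simp only [sub_zero, smul_sub]
      abel
    have b2 : C * Real.sqrt T * b - ‖μ‖ * b - a / T ≤ ‖μ • s - D s‖ := by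
      have step : C * Real.sqrt T * b - ‖μ‖ * b - a / T
          ≤ ‖(μ • s - D s) - p (μ • s - D s)‖ := by
        rw [hq1]
        have t1 : ‖(D (p s) - p (D (p s))) + (D (s - p s) - p (D (s - p s)))‖
            ≥ ‖D (s - p s) - p (D (s - p s))‖ - ‖D (p s) - p (D (p s))‖ := by
          have h := norm_sub_le ((D (p s) - p (D (p s))) + (D (s - p s) - p (D (s - p s))))
            (D (p s) - p (D (p s)))
          have heq : (D (p s) - p (D (p s))) + (D (s - p s) - p (D (s - p s)))
              - (D (p s) - p (D (p s))) = D (s - p s) - p (D (s - p s)) := by abel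
          rw [heq] at h
          linarith
        have t2 : ‖μ • (s - p s) - ((D (p s) - p (D (p s))) + (D (s - p s) - p (D (s - p s))))‖
            ≥ ‖(D (p s) - p (D (p s))) + (D (s - p s) - p (D (s - p s)))‖ - ‖μ • (s - p s)‖ := by
          rw [norm_sub_rev]; exact norm_sub_norm_le _ _
        have t3 := h4 s
        have t4 := h3 s
        rw [norm_smul] at t2
        linarith
      exact step.trans (hqle _)
    -- combine
    have hs : ‖s‖ ≤ a + b := htri s
    have h2δ : 2 * (δ * ‖s‖) ≤ 2 * ‖μ • s - D s‖ := by
      have e1 : 2 * δ * a ≤ ‖μ‖ * a - a / T := by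
        have h := mul_le_mul_of_nonneg_right
          (show 2 * δ ≤ ‖μ‖ - 1 / T by rw [hμ]; linarith) ha0
        have hr : (‖μ‖ - 1 / T) * a = ‖μ‖ * a - a / T := by ring
        linarith
      have e2 : 2 * δ * b ≤ C * Real.sqrt T * b - ‖μ‖ * b - b / T := by
        have h := mul_le_mul_of_nonneg_right
          (show 2 * δ ≤ C * Real.sqrt T - ‖μ‖ - 1 / T by rw [hμ]; linarith) hb0
        have hr : (C * Real.sqrt T - ‖μ‖ - 1 / T) * b
            = C * Real.sqrt T * b - ‖μ‖ * b - b / T := by ring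
        linarith
      have e3 : δ * ‖s‖ ≤ δ * (a + b) := mul_le_mul_of_nonneg_left hs hδ.le
      linarith
    linarith
  have main : ∀ s : H, ‖lam ^ 2 • s - D (D s)‖ ≥ δ ^ 2 * ‖s‖ := by
    intro s
    set u := lam • s + D s with hu
    have hfac : lam ^ 2 • s - D (D s) = lam • u - D u := by
      rw [hu, map_add, smul_add, map_smul]
      rw [sq, mul_smul]
      abel
    have h1' : ‖lam • u - D u‖ ≥ δ * ‖u‖ := key lam rfl u
    have h2' : ‖u‖ ≥ δ * ‖s‖ := by
      have := key (-lam) (by simp) s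
      have hneg : (-lam) • s - D s = -u := by rw [hu]; simp [neg_smul]; abel
      rw [hneg, norm_neg] at this
      exact this
    calc ‖lam ^ 2 • s - D (D s)‖ = ‖lam • u - D u‖ := by rw [hfac]
      _ ≥ δ * ‖u‖ := h1'
      _ ≥ δ * (δ * ‖s‖) := mul_le_mul_of_nonneg_left h2' hδ.le
      _ = δ ^ 2 * ‖s‖ := by ring
  refine ⟨main, ?_⟩
  intro hev
  obtain ⟨v, hv⟩ := hev.exists_hasEigenvector
  have hv1 : (D ∘ₗ D) v = lam ^ 2 • v := hv.apply_eq_smul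
  have hv2 : v ≠ 0 := hv.right
  have := main v
  rw [show D (D v) = (D ∘ₗ D) v from rfl, hv1, sub_self, norm_zero] at this
  have : δ ^ 2 * ‖v‖ ≤ 0 := this
  have hpos : 0 < δ ^ 2 * ‖v‖ :=
    mul_pos (pow_pos hδ 2) (norm_pos_iff.mpr hv2)
  linarith
end
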